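/- arXiv:0912.5151 — 4 statements merged into one kernel-verified Lean document; each statement's English description precedes it below -/
import Mathlib

section
/- For all real μ > −1/2, ν > −1/2 and every a > 0, ∫_0^a x^μ (a−x)^ν I_μ(x) I_ν(a−x) dx = (Γ(μ+1/2)Γ(ν+1/2)/(√(2π) · Γ(μ+ν+1))) · a^{μ+ν+1/2} · I_{μ+ν+1/2}(a) (the semigroup-type property of modified Bessel functions). -/
open MeasureTheory Real Finset

/-- The modified Bessel function of the first kind of order `ν`, defined by its series. -/
noncomputable def besselI (ν x : ℝ) : ℝ :=
  ∑' k : ℕ, (x / 2) ^ (2 * (k : ℝ) + ν) /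
    (Real.Gamma ((k : ℝ) + 1) * Real.Gamma ((k : ℝ) + ν + 1))


noncomputable def poch (x : ℝ) : ℕ → ℝ
  | 0 => 1
  | (k+1) => poch x k * (x + k)

lemma poch_succ (x : ℝ) (k : ℕ) : poch x (k+1) = poch x k * (x + k) := rfl

lemma binom_rec (n : ℕ) (f : ℕ → ℝ) :
    ∑ k ∈ range (n+2), ((n+1).choose k : ℝ) * f k
      = ∑ k ∈ range (n+1), (n.choose k : ℝ) * f k
        + ∑ k ∈ range (n+1), (n.choose k : ℝ) * f (k+1) := by
  have h2 : ∑ k ∈ range (n+2), (n.choose k : ℝ) * f k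
      = ∑ k ∈ range (n+1), (n.choose (k+1) : ℝ) * f (k+1) + (n.choose 0 : ℝ) * f 0 :=
    Finset.sum_range_succ' _ (n+1)
  have h3 : ∑ k ∈ range (n+2), (n.choose k : ℝ) * f k
      = ∑ k ∈ range (n+1), (n.choose k : ℝ) * f k := by
    rw [Finset.sum_range_succ, Nat.choose_succ_self]; simp
  rw [Finset.sum_range_succ' _ (n+1)]
  have : ∀ k, (((n+1).choose (k+1) : ℝ)) = (n.choose k : ℝ) + (n.choose (k+1) : ℝ) := by
    intro k; rw [Nat.choose_succ_succ]; push_cast; ring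
  simp only [this, add_mul, Finset.sum_add_distrib]
  simp only [Nat.choose_zero_right, Nat.cast_one, one_mul] at h2 ⊢
  linarith [h2, h3]

lemma vdm (α β : ℝ) (n : ℕ) :
    ∑ k ∈ range (n+1), (n.choose k : ℝ) * (poch α k * poch β (n-k)) = poch (α+β) n := by
  induction n with
  | zero => simp [poch]
  | succ n ih =>
    rw [binom_rec n (fun k => poch α k * poch β (n+1-k))]
    have e1 : ∀ k ∈ range (n+1), (n.choose k : ℝ) * (poch α k * poch β (n+1-k))
        = (n.choose k : ℝ) * (poch α k * poch β (n-k)) * (β + (n-k : ℕ)) := by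
      intro k hk
      have hk' : k ≤ n := Nat.lt_succ_iff.mp (Finset.mem_range.mp hk)
      have : n + 1 - k = (n - k) + 1 := by omega
      rw [this, poch_succ]; ring
    have e2 : ∀ k ∈ range (n+1), (n.choose k : ℝ) * (poch α (k+1) * poch β (n+1-(k+1)))
        = (n.choose k : ℝ) * (poch α k * poch β (n-k)) * (α + k) := by
      intro k hk
      have : n + 1 - (k+1) = n - k := by omega
      rw [this, poch_succ]; ring
    rw [Finset.sum_congr rfl e1, Finset.sum_congr rfl e2, ← Finset.sum_add_distrib]
    have e3 : ∀ k ∈ range (n+1),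
        (n.choose k : ℝ) * (poch α k * poch β (n-k)) * (β + (n-k : ℕ))
          + (n.choose k : ℝ) * (poch α k * poch β (n-k)) * (α + k)
        = (n.choose k : ℝ) * (poch α k * poch β (n-k)) * (α + β + n) := by
      intro k hk
      have hk' : k ≤ n := Nat.lt_succ_iff.mp (Finset.mem_range.mp hk)
      have : ((n - k : ℕ) : ℝ) = (n : ℝ) - k := by
        push_cast [Nat.cast_sub hk']; ring
      rw [this]; ring
    rw [Finset.sum_congr rfl e3, ← Finset.sum_mul, ih, poch_succ]

lemma Gamma_poch {x : ℝ} (hx : 0 < x) (n : ℕ) :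
    Real.Gamma (x + n) = poch x n * Real.Gamma x := by
  induction n with
  | zero => simp [poch]
  | succ n ih =>
    have hxn : (0:ℝ) < x + n := by positivity
    have : x + ((n:ℕ)+1 : ℕ) = (x + n) + 1 := by push_cast; ring
    rw [this, Real.Gamma_add_one hxn.ne', ih, poch_succ]; ring

/-- Gamma-form Chu-Vandermonde. -/
lemma vdm_gamma {α β : ℝ} (hα : 0 < α) (hβ : 0 < β) (n : ℕ) :
    ∑ k ∈ range (n+1),
        Real.Gamma (k + α) * Real.Gamma ((n - k : ℕ) + β)
          / (Real.Gamma (k+1) * Real.Gamma ((n-k : ℕ)+1))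
      = Real.Gamma α * Real.Gamma β * Real.Gamma (n + (α + β))
        / (Real.Gamma (α + β) * Real.Gamma (n+1)) := by
  have key := vdm α β n
  have hfac : ∀ m : ℕ, Real.Gamma ((m : ℝ) + 1) = (m.factorial : ℝ) := by
    intro m
    exact_mod_cast Real.Gamma_nat_eq_factorial m
  have e1 : ∀ k ∈ range (n+1),
      Real.Gamma (k + α) * Real.Gamma ((n - k : ℕ) + β)
        / (Real.Gamma (k+1) * Real.Gamma ((n-k : ℕ)+1))
      = (Real.Gamma α * Real.Gamma β / (n.factorial : ℝ))
          * ((n.choose k : ℝ) * (poch α k * poch β (n-k))) := by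
    intro k hk
    have hk' : k ≤ n := Nat.lt_succ_iff.mp (Finset.mem_range.mp hk)
    rw [show (k:ℝ) + α = α + k by ring, Gamma_poch hα, show ((n-k:ℕ):ℝ) + β = β + (n-k:ℕ) by ring,
      Gamma_poch hβ, hfac, hfac]
    rw [Nat.choose_eq_factorial_div_factorial hk',
      Nat.cast_div (Nat.factorial_mul_factorial_dvd_factorial hk') (by positivity)]
    have h1 : (k.factorial : ℝ) ≠ 0 := by positivity
    have h2 : ((n-k).factorial : ℝ) ≠ 0 := by positivity
    have h3 : (n.factorial : ℝ) ≠ 0 := by positivity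
    push_cast
    field_simp
  rw [Finset.sum_congr rfl e1, ← Finset.mul_sum, key]
  rw [show (n:ℝ) + (α+β) = (α+β) + n by ring, Gamma_poch (by positivity), hfac]
  have h3 : (n.factorial : ℝ) ≠ 0 := by positivity
  have h4 : Real.Gamma (α+β) ≠ 0 := (Real.Gamma_pos_of_pos (by positivity)).ne'
  field_simp

lemma summable_aux {c t : ℝ} (hc : 0 < c) (ht : 0 < t) :
    Summable (fun n : ℕ => t^n / (Real.Gamma ((n:ℝ)+1) * Real.Gamma ((n:ℝ)+c))) := by
  set f : ℕ → ℝ := fun n => t^n / (Real.Gamma ((n:ℝ)+1) * Real.Gamma ((n:ℝ)+c)) with hf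
  have hpos : ∀ n : ℕ, 0 < f n := by
    intro n
    have h1 : 0 < Real.Gamma ((n:ℝ)+1) := Real.Gamma_pos_of_pos (by positivity)
    have h2 : 0 < Real.Gamma ((n:ℝ)+c) := Real.Gamma_pos_of_pos (by positivity)
    positivity
  have hratio : ∀ n : ℕ, ‖f (n+1)‖ / ‖f n‖ = t / (((n:ℝ)+1) * ((n:ℝ)+c)) := by
    intro n
    have h1 : 0 < Real.Gamma ((n:ℝ)+1) := Real.Gamma_pos_of_pos (by positivity)
    have h2 : 0 < Real.Gamma ((n:ℝ)+c) := Real.Gamma_pos_of_pos (by positivity)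
    rw [Real.norm_of_nonneg (hpos _).le, Real.norm_of_nonneg (hpos _).le, hf]
    simp only
    rw [show ((n+1 : ℕ):ℝ) + 1 = ((n:ℝ)+1) + 1 by push_cast; ring,
      show ((n+1 : ℕ):ℝ) + c = ((n:ℝ)+c) + 1 by push_cast; ring,
      Real.Gamma_add_one (by positivity), Real.Gamma_add_one (by positivity : ((n:ℝ)+c) ≠ 0)]
    field_simp
    ring
  apply summable_of_ratio_test_tendsto_lt_one one_pos
    (Filter.Eventually.of_forall (fun n => (hpos n).ne'))
  simp only [hratio]
  have hd : Filter.Tendsto (fun n : ℕ => (((n:ℝ)+1) * ((n:ℝ)+c))) Filter.atTop Filter.atTop := by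
    apply Filter.Tendsto.atTop_mul_atTop₀
    · exact Filter.tendsto_atTop_add_const_right _ _ tendsto_natCast_atTop_atTop
    · exact Filter.tendsto_atTop_add_const_right _ _ tendsto_natCast_atTop_atTop
  exact Filter.Tendsto.div_atTop tendsto_const_nhds hd

lemma beta_real {u v a : ℝ} (hu : 0 < u) (hv : 0 < v) (ha : 0 < a) :
    ∫ x in (0:ℝ)..a, x^(u-1) * (a-x)^(v-1)
      = a^(u+v-1) * (Real.Gamma u * Real.Gamma v / Real.Gamma (u+v)) := by
  have hGuv : Real.Gamma (u+v) ≠ 0 := (Real.Gamma_pos_of_pos (by positivity)).ne'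
  have hbeta : Complex.betaIntegral u v
      = (Real.Gamma u * Real.Gamma v / Real.Gamma (u+v) : ℝ) := by
    have h := Complex.Gamma_mul_Gamma_eq_betaIntegral
      (s := (u:ℂ)) (t := (v:ℂ)) (by simpa using hu) (by simpa using hv)
    rw [show ((u:ℂ)+(v:ℂ)) = ((u+v : ℝ) : ℂ) by push_cast; ring] at h
    rw [Complex.Gamma_ofReal, Complex.Gamma_ofReal, Complex.Gamma_ofReal] at h
    have hne : ((Real.Gamma (u+v) : ℝ) : ℂ) ≠ 0 := by exact_mod_cast hGuv
    have hcast : ((Real.Gamma u * Real.Gamma v / Real.Gamma (u+v) : ℝ) : ℂ)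
        = (Real.Gamma u : ℂ) * (Real.Gamma v : ℂ) / (Real.Gamma (u+v) : ℂ) := by
      push_cast; ring
    rw [hcast, eq_div_iff hne]
    linear_combination -h
  have hscaled := Complex.betaIntegral_scaled (u:ℂ) (v:ℂ) ha
  have hcongr : ∫ x in (0:ℝ)..a, ((x^(u-1) * (a-x)^(v-1) : ℝ) : ℂ)
      = ∫ x in (0:ℝ)..a, (x:ℂ)^((u:ℂ)-1) * ((a:ℂ)-(x:ℂ))^((v:ℂ)-1) := by
    apply intervalIntegral.integral_congr
    intro x hx
    rw [Set.uIcc_of_le ha.le] at hx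
    obtain ⟨hx0, hxa⟩ := hx
    have h1 : ((x^(u-1) : ℝ) : ℂ) = (x:ℂ)^((u:ℂ)-1) := by
      rw [show ((u:ℂ)-1) = ((u-1 : ℝ) : ℂ) by push_cast; ring]
      exact Complex.ofReal_cpow hx0 _
    have h2 : (((a-x)^(v-1) : ℝ) : ℂ) = ((a:ℂ)-(x:ℂ))^((v:ℂ)-1) := by
      rw [show ((v:ℂ)-1) = ((v-1 : ℝ) : ℂ) by push_cast; ring,
        show ((a:ℂ)-(x:ℂ)) = ((a-x : ℝ) : ℂ) by push_cast; ring]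
      exact Complex.ofReal_cpow (by linarith) _
    simp [h1, h2]
  have hof : ∫ x in (0:ℝ)..a, ((x^(u-1) * (a-x)^(v-1) : ℝ) : ℂ)
      = ((∫ x in (0:ℝ)..a, x^(u-1) * (a-x)^(v-1) : ℝ) : ℂ) :=
    intervalIntegral.integral_ofReal
  have hapow : ((a:ℂ))^((u:ℂ)+(v:ℂ)-1) = ((a^(u+v-1) : ℝ) : ℂ) := by
    rw [show ((u:ℂ)+(v:ℂ)-1) = ((u+v-1 : ℝ) : ℂ) by push_cast; ring]
    exact (Complex.ofReal_cpow ha.le _).symm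
  have : ((∫ x in (0:ℝ)..a, x^(u-1) * (a-x)^(v-1) : ℝ) : ℂ)
      = ((a^(u+v-1) * (Real.Gamma u * Real.Gamma v / Real.Gamma (u+v)) : ℝ) : ℂ) := by
    rw [← hof, hcongr, hscaled, hbeta, hapow]
    push_cast
    ring
  exact_mod_cast this

lemma beta_integrable {p q a : ℝ} (hp : -1 < p) (hq : -1 < q) (ha : 0 < a) :
    IntervalIntegrable (fun x => x^p * (a-x)^q) volume 0 a := by
  have hc : IntervalIntegrable (fun x : ℝ =>
      (x:ℂ)^((p+1:ℝ)-1 : ℂ) * ((1:ℂ)-(x:ℂ))^((q+1:ℝ)-1 : ℂ)) volume 0 1 := by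
    have := Complex.betaIntegral_convergent (u := ((p+1:ℝ):ℂ)) (v := ((q+1:ℝ):ℂ))
      (by simpa using by linarith) (by simpa using by linarith)
    simpa using this
  have hre : IntervalIntegrable (fun x : ℝ => x^p * (1-x)^q) volume 0 1 := by
    rw [intervalIntegrable_iff_integrableOn_Ioo_of_le zero_le_one] at hc ⊢
    have := hc.re
    apply (MeasureTheory.IntegrableOn.congr_fun this ?_ measurableSet_Ioo)
    intro x hx
    obtain ⟨hx0, hx1⟩ := hx
    have h1 : ((x:ℂ))^((p+1:ℝ)-1 : ℂ) = ((x^p : ℝ) : ℂ) := by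
      rw [show ((p+1:ℝ)-1 : ℂ) = ((p:ℝ):ℂ) by push_cast; ring]
      exact (Complex.ofReal_cpow hx0.le _).symm
    have h2 : ((1:ℂ)-(x:ℂ))^((q+1:ℝ)-1 : ℂ) = (((1-x)^q : ℝ) : ℂ) := by
      rw [show ((q+1:ℝ)-1 : ℂ) = ((q:ℝ):ℂ) by push_cast; ring,
        show ((1:ℂ)-(x:ℂ)) = ((1-x:ℝ):ℂ) by push_cast; ring]
      exact (Complex.ofReal_cpow (by linarith) _).symm
    simp only [RCLike.re_to_complex, h1, h2, ← Complex.ofReal_mul, Complex.ofReal_re]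
  have hstretch : IntervalIntegrable (fun x : ℝ => a^(p+q) * ((a⁻¹*x)^p * (1-a⁻¹*x)^q))
      volume 0 a := by
    have := (hre.comp_mul_left (c := a⁻¹)).const_mul (a^(p+q))
    simpa [ha.ne', div_eq_mul_inv] using this
  rw [intervalIntegrable_iff_integrableOn_Ioo_of_le ha.le] at hstretch ⊢
  apply (MeasureTheory.IntegrableOn.congr_fun hstretch ?_ measurableSet_Ioo)
  intro x hx
  obtain ⟨hx0, hxa⟩ := hx
  have h1 : (a⁻¹*x)^p = a⁻¹^p * x^p := Real.mul_rpow (by positivity) hx0.le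
  have h2 : (1-a⁻¹*x) = a⁻¹*(a-x) := by field_simp
  have h3 : (a⁻¹*(a-x))^q = a⁻¹^q * (a-x)^q := Real.mul_rpow (by positivity) (by linarith)
  simp only
  rw [h1, h2, h3, Real.inv_rpow ha.le, Real.inv_rpow ha.le, Real.rpow_add ha]
  have hap := (Real.rpow_pos_of_pos ha p).ne'
  have haq := (Real.rpow_pos_of_pos ha q).ne'
  field_simp

lemma rpow_split {a : ℝ} (ha : 0 < a) (c : ℝ) (k : ℕ) :
    a^(2*(k:ℝ)+c) = ((a^2 : ℝ))^k * a^c := by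
  rw [Real.rpow_add ha, show (2:ℝ)*(k:ℝ) = ((2*k : ℕ):ℝ) by push_cast; ring,
    Real.rpow_natCast, pow_mul]

lemma Gamma_two_mul {s : ℝ} (hs : 0 < s) :
    Real.Gamma (2*s) = Real.Gamma s * Real.Gamma (s+1/2) * (2:ℝ)^(2*s-1) / Real.sqrt π := by
  have h := Real.Gamma_mul_Gamma_add_half s
  have h2 : (2:ℝ)^((1:ℝ)-2*s) * (2:ℝ)^(2*s-1) = 1 := by
    rw [← Real.rpow_add two_pos]; norm_num
  have hπ : Real.sqrt π ≠ 0 := by positivity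
  have h3 : (2:ℝ)^((1:ℝ)-2*s) ≠ 0 := by positivity
  rw [eq_div_iff hπ]
  linear_combination -(2:ℝ)^(2*s-1) * h - Real.Gamma (2*s) * Real.sqrt π * h2

lemma bessel_term {ν x : ℝ} (hx : 0 < x) (k : ℕ) :
    (x/2)^(2*(k:ℝ)+ν) / (Real.Gamma ((k:ℝ)+1) * Real.Gamma ((k:ℝ)+ν+1))
      = (x/2)^ν * ((x^2/4)^k / (Real.Gamma ((k:ℝ)+1) * Real.Gamma ((k:ℝ)+(ν+1)))) := by
  rw [rpow_split (by positivity : (0:ℝ) < x/2) ν k]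
  rw [show ((x/2)^2 : ℝ) = x^2/4 by ring, show (k:ℝ)+ν+1 = (k:ℝ)+(ν+1) by ring]
  ring

lemma besselI_summable' {ν x : ℝ} (hν : -1/2 < ν) (hx : 0 < x) :
    Summable (fun k : ℕ => (x/2)^(2*(k:ℝ)+ν) / (Real.Gamma ((k:ℝ)+1) * Real.Gamma ((k:ℝ)+ν+1))) := by
  rw [summable_congr (fun k => bessel_term hx k)]
  exact ((summable_aux (by linarith : (0:ℝ) < ν+1) (by positivity : (0:ℝ) < x^2/4)).mul_left _)

lemma besselI_eq {ν x : ℝ} (hx : 0 < x) :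
    besselI ν x = (x/2)^ν * ∑' k : ℕ, (x^2/4)^k
      / (Real.Gamma ((k:ℝ)+1) * Real.Gamma ((k:ℝ)+(ν+1))) := by
  unfold besselI
  rw [← tsum_mul_left]
  exact tsum_congr (fun k => bessel_term hx k)

set_option maxHeartbeats 2000000 in
lemma Ival_eq {μ ν a : ℝ} (hμ : -1/2 < μ) (hν : -1/2 < ν) (ha : 0 < a) (k m : ℕ) :
    (((2:ℝ)^(2*(k:ℝ)+μ) * Real.Gamma ((k:ℝ)+1) * Real.Gamma ((k:ℝ)+μ+1))⁻¹ *
     ((2:ℝ)^(2*(m:ℝ)+ν) * Real.Gamma ((m:ℝ)+1) * Real.Gamma ((m:ℝ)+ν+1))⁻¹) *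
      (a^((2*(k:ℝ)+2*μ+1) + (2*(m:ℝ)+2*ν+1) - 1) *
        (Real.Gamma (2*(k:ℝ)+2*μ+1) * Real.Gamma (2*(m:ℝ)+2*ν+1)
          / Real.Gamma ((2*(k:ℝ)+2*μ+1) + (2*(m:ℝ)+2*ν+1))))
    = (a^(2*μ+2*ν+1) / ((2:ℝ)^(μ+ν+1) * Real.sqrt π)) *
        ((a^2/4)^(k+m) * (Real.Gamma ((k:ℝ)+(μ+1/2)) * Real.Gamma ((m:ℝ)+(ν+1/2)))
          / (Real.Gamma ((k:ℝ)+1) * Real.Gamma ((m:ℝ)+1) *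
             (Real.Gamma (((k+m:ℕ):ℝ)+(μ+ν+1)) * Real.Gamma (((k+m:ℕ):ℝ)+((μ+ν+1)+1/2))))) := by
  have hμ' : (0:ℝ) < μ+1/2 := by linarith
  have hν' : (0:ℝ) < ν+1/2 := by linarith
  have hk0 : (0:ℝ) ≤ (k:ℝ) := Nat.cast_nonneg k
  have hm0 : (0:ℝ) ≤ (m:ℝ) := Nat.cast_nonneg m
  have hn0 : (0:ℝ) ≤ ((k+m:ℕ):ℝ) := Nat.cast_nonneg _
  have hs1 : (0:ℝ) < (k:ℝ)+(μ+1/2) := add_pos_of_nonneg_of_pos hk0 hμ'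
  have hs2 : (0:ℝ) < (m:ℝ)+(ν+1/2) := add_pos_of_nonneg_of_pos hm0 hν'
  have hs3 : (0:ℝ) < ((k+m:ℕ):ℝ)+(μ+ν+1) := add_pos_of_nonneg_of_pos hn0 (by linarith)
  have d1 : Real.Gamma (2*(k:ℝ)+2*μ+1)
      = Real.Gamma ((k:ℝ)+(μ+1/2)) * Real.Gamma ((k:ℝ)+μ+1)
          * (2:ℝ)^(2*(k:ℝ)+2*μ) / Real.sqrt π := by
    have h := Gamma_two_mul hs1
    rw [show 2*((k:ℝ)+(μ+1/2))-1 = 2*(k:ℝ)+2*μ by ring,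
      show (k:ℝ)+(μ+1/2)+1/2 = (k:ℝ)+μ+1 by ring,
      show 2*((k:ℝ)+(μ+1/2)) = 2*(k:ℝ)+2*μ+1 by ring] at h
    exact h
  have d2 : Real.Gamma (2*(m:ℝ)+2*ν+1)
      = Real.Gamma ((m:ℝ)+(ν+1/2)) * Real.Gamma ((m:ℝ)+ν+1)
          * (2:ℝ)^(2*(m:ℝ)+2*ν) / Real.sqrt π := by
    have h := Gamma_two_mul hs2
    rw [show 2*((m:ℝ)+(ν+1/2))-1 = 2*(m:ℝ)+2*ν by ring,
      show (m:ℝ)+(ν+1/2)+1/2 = (m:ℝ)+ν+1 by ring,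
      show 2*((m:ℝ)+(ν+1/2)) = 2*(m:ℝ)+2*ν+1 by ring] at h
    exact h
  have d3 : Real.Gamma ((2*(k:ℝ)+2*μ+1) + (2*(m:ℝ)+2*ν+1))
      = Real.Gamma (((k+m:ℕ):ℝ)+(μ+ν+1)) * Real.Gamma (((k+m:ℕ):ℝ)+((μ+ν+1)+1/2))
          * (2:ℝ)^(2*((k+m:ℕ):ℝ)+(2*μ+2*ν+1)) / Real.sqrt π := by
    have h := Gamma_two_mul hs3
    rw [show 2*(((k+m:ℕ):ℝ)+(μ+ν+1))-1 = 2*((k+m:ℕ):ℝ)+(2*μ+2*ν+1) by ring,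
      show ((k+m:ℕ):ℝ)+(μ+ν+1)+1/2 = ((k+m:ℕ):ℝ)+((μ+ν+1)+1/2) by ring,
      show 2*(((k+m:ℕ):ℝ)+(μ+ν+1)) = (2*(k:ℝ)+2*μ+1) + (2*(m:ℝ)+2*ν+1) by push_cast; ring] at h
    exact h
  have pa : a^((2*(k:ℝ)+2*μ+1) + (2*(m:ℝ)+2*ν+1) - 1)
      = (a^2)^k * ((a^2)^m * a^(2*μ+2*ν+1)) := by
    rw [show (2*(k:ℝ)+2*μ+1) + (2*(m:ℝ)+2*ν+1) - 1 = 2*(k:ℝ)+(2*(m:ℝ)+(2*μ+2*ν+1)) by ring,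
      rpow_split ha, rpow_split ha]
  have p2k : (2:ℝ)^(2*(k:ℝ)+μ) = 4^k * 2^μ := by
    rw [rpow_split two_pos]; norm_num
  have p2m : (2:ℝ)^(2*(m:ℝ)+ν) = 4^m * 2^ν := by
    rw [rpow_split two_pos]; norm_num
  have p2n : (2:ℝ)^(2*((k+m:ℕ):ℝ)+(2*μ+2*ν+1))
      = (4^k * 4^m) * ((2:ℝ)^μ * (2:ℝ)^μ * ((2:ℝ)^ν * (2:ℝ)^ν) * 2) := by
    rw [rpow_split two_pos, show (2*μ+2*ν+1 : ℝ) = μ+(μ+(ν+(ν+1))) by ring,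
      Real.rpow_add two_pos, Real.rpow_add two_pos, Real.rpow_add two_pos,
      Real.rpow_add two_pos, Real.rpow_one, pow_add]
    norm_num
    ring
  have p2kk : (2:ℝ)^(2*(k:ℝ)+2*μ) = 4^k * ((2:ℝ)^μ * (2:ℝ)^μ) := by
    rw [rpow_split two_pos, show (2*μ : ℝ) = μ+μ by ring, Real.rpow_add two_pos]
    norm_num
  have p2mm : (2:ℝ)^(2*(m:ℝ)+2*ν) = 4^m * ((2:ℝ)^ν * (2:ℝ)^ν) := by
    rw [rpow_split two_pos, show (2*ν : ℝ) = ν+ν by ring, Real.rpow_add two_pos]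
    norm_num
  have pμν : (2:ℝ)^(μ+ν+1) = (2:ℝ)^μ * (2:ℝ)^ν * 2 := by
    rw [show (μ+ν+1 : ℝ) = μ+(ν+1) by ring, Real.rpow_add two_pos, Real.rpow_add two_pos,
      Real.rpow_one]
    ring
  have pam : ((a^2/4 : ℝ))^(k+m) = ((a^2)^k * (a^2)^m) / (4^k * 4^m) := by
    rw [div_pow, pow_add, pow_add]
  have gk1 : Real.Gamma ((k:ℝ)+1) ≠ 0 := (Real.Gamma_pos_of_pos (by positivity)).ne'
  have gm1 : Real.Gamma ((m:ℝ)+1) ≠ 0 := (Real.Gamma_pos_of_pos (by positivity)).ne'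
  have gk2 : Real.Gamma ((k:ℝ)+μ+1) ≠ 0 :=
    (Real.Gamma_pos_of_pos (by linarith : (0:ℝ) < (k:ℝ)+μ+1)).ne'
  have gm2 : Real.Gamma ((m:ℝ)+ν+1) ≠ 0 :=
    (Real.Gamma_pos_of_pos (by linarith : (0:ℝ) < (m:ℝ)+ν+1)).ne'
  have gk3 : Real.Gamma ((k:ℝ)+(μ+1/2)) ≠ 0 := (Real.Gamma_pos_of_pos hs1).ne'
  have gm3 : Real.Gamma ((m:ℝ)+(ν+1/2)) ≠ 0 := (Real.Gamma_pos_of_pos hs2).ne'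
  have gn1 : Real.Gamma (((k+m:ℕ):ℝ)+(μ+ν+1)) ≠ 0 := (Real.Gamma_pos_of_pos hs3).ne'
  have gn2 : Real.Gamma (((k+m:ℕ):ℝ)+((μ+ν+1)+1/2)) ≠ 0 :=
    (Real.Gamma_pos_of_pos (by linarith : (0:ℝ) < ((k+m:ℕ):ℝ)+((μ+ν+1)+1/2))).ne'
  have hπ : Real.sqrt π ≠ 0 := by positivity
  have h2μ : (2:ℝ)^μ ≠ 0 := by positivity
  have h2ν : (2:ℝ)^ν ≠ 0 := by positivity
  have h4k : ((4:ℝ))^k ≠ 0 := by positivity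
  have h4m : ((4:ℝ))^m ≠ 0 := by positivity
  have ha2k : ((a^2 : ℝ))^k ≠ 0 := by positivity
  have ha2m : ((a^2 : ℝ))^m ≠ 0 := by positivity
  rw [d1, d2, d3, pa, p2k, p2m, p2n, p2kk, p2mm, pμν, pam]
  set g1 := Real.Gamma ((k:ℝ)+1) with hg1
  set g2 := Real.Gamma ((m:ℝ)+1) with hg2
  set g3 := Real.Gamma ((k:ℝ)+μ+1) with hg3
  set g4 := Real.Gamma ((m:ℝ)+ν+1) with hg4
  set g5 := Real.Gamma ((k:ℝ)+(μ+1/2)) with hg5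
  set g6 := Real.Gamma ((m:ℝ)+(ν+1/2)) with hg6
  set g7 := Real.Gamma (((k+m:ℕ):ℝ)+(μ+ν+1)) with hg7
  set g8 := Real.Gamma (((k+m:ℕ):ℝ)+((μ+ν+1)+1/2)) with hg8
  set t1 := (2:ℝ)^μ with ht1
  set t2 := (2:ℝ)^ν with ht2
  set sp := Real.sqrt π with hsp
  set u := a^(2*μ+2*ν+1) with hu
  set w1 := ((a^2 : ℝ))^k with hw1
  set w2 := ((a^2 : ℝ))^m with hw2
  set f1 := ((4:ℝ))^k with hf1
  set f2 := ((4:ℝ))^m with hf2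
  field_simp

lemma term_mul {c y : ℝ} (hy : 0 < y) (k : ℕ) :
    y^c * ((y/2)^(2*(k:ℝ)+c) / (Real.Gamma ((k:ℝ)+1) * Real.Gamma ((k:ℝ)+c+1)))
      = ((2:ℝ)^(2*(k:ℝ)+c) * Real.Gamma ((k:ℝ)+1) * Real.Gamma ((k:ℝ)+c+1))⁻¹
          * y^(2*(k:ℝ)+2*c) := by
  have hg1 : Real.Gamma ((k:ℝ)+1) ≠ 0 := (Real.Gamma_pos_of_pos (by positivity)).ne'
  have h2 : ((2:ℝ))^(2*(k:ℝ)+c) ≠ 0 := by positivity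
  have hyy : y^c * y^(2*(k:ℝ)+c) = y^(2*(k:ℝ)+2*c) := by
    rw [← Real.rpow_add hy]; ring_nf
  rw [Real.div_rpow hy.le (by norm_num : (0:ℝ) ≤ 2)]
  rw [mul_inv, mul_inv, ← hyy]
  field_simp

set_option maxHeartbeats 3000000 in
/-- The semigroup-type property of modified Bessel functions:
`∫_0^a x^μ (a−x)^ν I_μ(x) I_ν(a−x) dx
  = (Γ(μ+1/2)Γ(ν+1/2)/(√(2π) Γ(μ+ν+1))) a^{μ+ν+1/2} I_{μ+ν+1/2}(a)`. -/
theorem stmt2 (μ ν a : ℝ) (hμ : -1 / 2 < μ) (hν : -1 / 2 < ν) (ha : 0 < a) :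
    ∫ x in (0 : ℝ)..a, x ^ μ * (a - x) ^ ν * besselI μ x * besselI ν (a - x) =
    Real.Gamma (μ + 1 / 2) * Real.Gamma (ν + 1 / 2) /
        (Real.sqrt (2 * π) * Real.Gamma (μ + ν + 1)) *
      a ^ (μ + ν + 1 / 2) * besselI (μ + ν + 1 / 2) a := by
  have hμ' : -1/2 < μ := hμ
  have hν' : -1/2 < ν := hν
  have hμ2 : (0:ℝ) < μ+1/2 := by linarith
  have hν2 : (0:ℝ) < ν+1/2 := by linarith
  set F : ℕ×ℕ → ℝ → ℝ := fun p x =>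
    (((2:ℝ)^(2*(p.1:ℝ)+μ) * Real.Gamma ((p.1:ℝ)+1) * Real.Gamma ((p.1:ℝ)+μ+1))⁻¹ *
     ((2:ℝ)^(2*(p.2:ℝ)+ν) * Real.Gamma ((p.2:ℝ)+1) * Real.Gamma ((p.2:ℝ)+ν+1))⁻¹) *
      (x^(2*(p.1:ℝ)+2*μ) * (a-x)^(2*(p.2:ℝ)+2*ν)) with hF
  set G : ℕ×ℕ → ℝ := fun p =>
    (a^(2*μ+2*ν+1) / ((2:ℝ)^(μ+ν+1) * Real.sqrt π)) *
        ((a^2/4)^(p.1+p.2) * (Real.Gamma ((p.1:ℝ)+(μ+1/2)) * Real.Gamma ((p.2:ℝ)+(ν+1/2)))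
          / (Real.Gamma ((p.1:ℝ)+1) * Real.Gamma ((p.2:ℝ)+1) *
             (Real.Gamma (((p.1+p.2:ℕ):ℝ)+(μ+ν+1)) *
              Real.Gamma (((p.1+p.2:ℕ):ℝ)+((μ+ν+1)+1/2))))) with hG
  set S : ℕ → ℝ := fun n =>
    ((a^2/4 : ℝ))^n / (Real.Gamma ((n:ℝ)+1) * Real.Gamma ((n:ℝ)+((μ+ν+1)+1/2))) with hS
  -- integrability of each term
  have hFint : ∀ p : ℕ×ℕ, MeasureTheory.IntegrableOn (F p) (Set.Ioo 0 a) volume := by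
    intro ⟨k, m⟩
    have h1 : (-1:ℝ) < 2*(k:ℝ)+2*μ := by
      have := Nat.cast_nonneg (α := ℝ) k; linarith
    have h2 : (-1:ℝ) < 2*(m:ℝ)+2*ν := by
      have := Nat.cast_nonneg (α := ℝ) m; linarith
    have := ((beta_integrable h1 h2 ha).const_mul
      (((2:ℝ)^(2*(k:ℝ)+μ) * Real.Gamma ((k:ℝ)+1) * Real.Gamma ((k:ℝ)+μ+1))⁻¹ *
       ((2:ℝ)^(2*(m:ℝ)+ν) * Real.Gamma ((m:ℝ)+1) * Real.Gamma ((m:ℝ)+ν+1))⁻¹))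
    rw [intervalIntegrable_iff_integrableOn_Ioo_of_le ha.le] at this
    exact this
  -- value of each term integral
  have hFval : ∀ p : ℕ×ℕ, ∫ x in Set.Ioo 0 a, F p x = G p := by
    intro ⟨k, m⟩
    rw [← MeasureTheory.integral_Ioc_eq_integral_Ioo,
      ← intervalIntegral.integral_of_le ha.le]
    simp only [hF]
    rw [intervalIntegral.integral_const_mul]
    rw [show (2*(k:ℝ)+2*μ) = (2*(k:ℝ)+2*μ+1) - 1 by ring,
      show (2*(m:ℝ)+2*ν) = (2*(m:ℝ)+2*ν+1) - 1 by ring]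
    have hu : (0:ℝ) < 2*(k:ℝ)+2*μ+1 := by
      have := Nat.cast_nonneg (α := ℝ) k; linarith
    have hv : (0:ℝ) < 2*(m:ℝ)+2*ν+1 := by
      have := Nat.cast_nonneg (α := ℝ) m; linarith
    rw [beta_real hu hv ha]
    simp only [hG]
    exact Ival_eq hμ' hν' ha k m
  -- nonnegativity of G
  have hGnn : ∀ p : ℕ×ℕ, 0 ≤ G p := by
    intro ⟨k, m⟩
    simp only [hG]
    have g1 : 0 < Real.Gamma ((k:ℝ)+1) := Real.Gamma_pos_of_pos (by positivity)
    have g2 : 0 < Real.Gamma ((m:ℝ)+1) := Real.Gamma_pos_of_pos (by positivity)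
    have g3 : 0 < Real.Gamma ((k:ℝ)+(μ+1/2)) :=
      Real.Gamma_pos_of_pos (add_pos_of_nonneg_of_pos (Nat.cast_nonneg k) hμ2)
    have g4 : 0 < Real.Gamma ((m:ℝ)+(ν+1/2)) :=
      Real.Gamma_pos_of_pos (add_pos_of_nonneg_of_pos (Nat.cast_nonneg m) hν2)
    have g5 : 0 < Real.Gamma (((k+m:ℕ):ℝ)+(μ+ν+1)) :=
      Real.Gamma_pos_of_pos (add_pos_of_nonneg_of_pos (Nat.cast_nonneg _) (by linarith))
    have g6 : 0 < Real.Gamma (((k+m:ℕ):ℝ)+((μ+ν+1)+1/2)) :=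
      Real.Gamma_pos_of_pos (add_pos_of_nonneg_of_pos (Nat.cast_nonneg _) (by linarith))
    positivity
  -- the fiber sums
  have hkey : ∀ n : ℕ, ∑ p ∈ Finset.HasAntidiagonal.antidiagonal n, G p
      = (a^(2*μ+2*ν+1) / ((2:ℝ)^(μ+ν+1) * Real.sqrt π))
          * (Real.Gamma (μ+1/2) * Real.Gamma (ν+1/2) / Real.Gamma (μ+ν+1)) * S n := by
    intro n
    rw [Finset.Nat.sum_antidiagonal_eq_sum_range_succ_mk]
    have e1 : ∀ k ∈ Finset.range (n+1), G (k, n-k)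
        = ((a^(2*μ+2*ν+1) / ((2:ℝ)^(μ+ν+1) * Real.sqrt π)) * ((a^2/4 : ℝ))^n
            / (Real.Gamma ((n:ℝ)+(μ+ν+1)) * Real.Gamma ((n:ℝ)+((μ+ν+1)+1/2))))
          * (Real.Gamma ((k:ℝ)+(μ+1/2)) * Real.Gamma (((n-k:ℕ):ℝ)+(ν+1/2))
              / (Real.Gamma ((k:ℝ)+1) * Real.Gamma (((n-k:ℕ):ℝ)+1))) := by
      intro k hk
      have hk' : k ≤ n := Nat.lt_succ_iff.mp (Finset.mem_range.mp hk)
      have hkn : k + (n - k) = n := by omega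
      simp only [hG, hkn]
      ring
    rw [Finset.sum_congr rfl e1, ← Finset.mul_sum]
    rw [vdm_gamma hμ2 hν2 n]
    have gn1 : Real.Gamma ((n:ℝ)+(μ+ν+1)) ≠ 0 :=
      (Real.Gamma_pos_of_pos (add_pos_of_nonneg_of_pos (Nat.cast_nonneg _) (by linarith))).ne'
    have gn2 : Real.Gamma ((n:ℝ)+((μ+ν+1)+1/2)) ≠ 0 :=
      (Real.Gamma_pos_of_pos (add_pos_of_nonneg_of_pos (Nat.cast_nonneg _) (by linarith))).ne'
    have gn3 : Real.Gamma ((n:ℝ)+1) ≠ 0 := (Real.Gamma_pos_of_pos (by positivity)).ne'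
    have gs : Real.Gamma (μ+ν+1) ≠ 0 := (Real.Gamma_pos_of_pos (by linarith)).ne'
    have hmatch : Real.Gamma ((n:ℝ)+(μ+1/2+(ν+1/2))) = Real.Gamma ((n:ℝ)+(μ+ν+1)) := by
      norm_num
      ring_nf
    rw [show (μ+1/2+(ν+1/2) : ℝ) = μ+ν+1 by ring]
    simp only [hS]
    set gα := Real.Gamma (μ+1/2) with hgα
    set gβ := Real.Gamma (ν+1/2) with hgβ
    set g1 := Real.Gamma ((n:ℝ)+(μ+ν+1)) with hg1
    set g2 := Real.Gamma ((n:ℝ)+((μ+ν+1)+1/2)) with hg2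
    set g3 := Real.Gamma ((n:ℝ)+1) with hg3
    set gg := Real.Gamma (μ+ν+1) with hgg
    set P := (((a:ℝ)^2/4))^n with hP
    set c0 := a^(2*μ+2*ν+1) / ((2:ℝ)^(μ+ν+1) * Real.sqrt π) with hc0
    field_simp
  have hSsum : Summable S := by
    simp only [hS]
    exact summable_aux (by linarith : (0:ℝ) < (μ+ν+1)+1/2) (by positivity : (0:ℝ) < a^2/4)
  have hfib : ∀ n : ℕ, ∑' y : (Finset.HasAntidiagonal.antidiagonal n : Finset (ℕ×ℕ)),
      (G ∘ (Finset.HasAntidiagonal.sigmaAntidiagonalEquivProd (A := ℕ))) ⟨n, y⟩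
      = ((a^(2*μ+2*ν+1) / ((2:ℝ)^(μ+ν+1) * Real.sqrt π))
          * (Real.Gamma (μ+1/2) * Real.Gamma (ν+1/2) / Real.Gamma (μ+ν+1))) * S n := by
    intro n
    rw [tsum_fintype]
    simp only [Function.comp, Finset.HasAntidiagonal.sigmaAntidiagonalEquivProd, Equiv.coe_fn_mk]
    rw [Finset.sum_coe_sort (Finset.HasAntidiagonal.antidiagonal n) G]
    exact hkey n
  have hcomp : Summable (G ∘ (Finset.HasAntidiagonal.sigmaAntidiagonalEquivProd (A := ℕ))) := by
    apply (summable_sigma_of_nonneg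
      (f := G ∘ (Finset.HasAntidiagonal.sigmaAntidiagonalEquivProd (A := ℕ))) (fun σ => hGnn _)).mpr
    constructor
    · intro n; exact (hasSum_fintype _).summable
    · apply Summable.congr (hSsum.mul_left
        ((a^(2*μ+2*ν+1) / ((2:ℝ)^(μ+ν+1) * Real.sqrt π))
          * (Real.Gamma (μ+1/2) * Real.Gamma (ν+1/2) / Real.Gamma (μ+ν+1))))
      intro n
      exact (hfib n).symm
  have hGsum : Summable G :=
    (Finset.HasAntidiagonal.sigmaAntidiagonalEquivProd (A := ℕ)).summable_iff.mp hcomp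
  have hGtsum : ∑' p : ℕ×ℕ, G p
      = ((a^(2*μ+2*ν+1) / ((2:ℝ)^(μ+ν+1) * Real.sqrt π))
          * (Real.Gamma (μ+1/2) * Real.Gamma (ν+1/2) / Real.Gamma (μ+ν+1))) * ∑' n, S n := by
    calc ∑' p : ℕ×ℕ, G p
        = ∑' σ : (Σ n : ℕ, (Finset.HasAntidiagonal.antidiagonal n : Finset (ℕ×ℕ))),
            (G ∘ (Finset.HasAntidiagonal.sigmaAntidiagonalEquivProd (A := ℕ))) σ :=
          ((Finset.HasAntidiagonal.sigmaAntidiagonalEquivProd (A := ℕ)).tsum_eq G).symm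
      _ = ∑' n : ℕ, ∑' y : (Finset.HasAntidiagonal.antidiagonal n : Finset (ℕ×ℕ)),
            (G ∘ (Finset.HasAntidiagonal.sigmaAntidiagonalEquivProd (A := ℕ))) ⟨n, y⟩ := Summable.tsum_sigma hcomp
      _ = ∑' n : ℕ, ((a^(2*μ+2*ν+1) / ((2:ℝ)^(μ+ν+1) * Real.sqrt π))
          * (Real.Gamma (μ+1/2) * Real.Gamma (ν+1/2) / Real.Gamma (μ+ν+1))) * S n :=
          tsum_congr hfib
      _ = _ := tsum_mul_left
  -- pointwise expansion of the integrand
  have hpt : Set.EqOn (fun x => x ^ μ * (a - x) ^ ν * besselI μ x * besselI ν (a - x))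
      (fun x => ∑' p : ℕ×ℕ, F p x) (Set.Ioo 0 a) := by
    intro x hx
    obtain ⟨hx0, hxa⟩ := hx
    have hax : 0 < a - x := by linarith
    have S1 : Summable (fun k : ℕ => x^μ *
        ((x/2)^(2*(k:ℝ)+μ) / (Real.Gamma ((k:ℝ)+1) * Real.Gamma ((k:ℝ)+μ+1)))) :=
      (besselI_summable' hμ' hx0).mul_left _
    have S2 : Summable (fun m : ℕ => (a-x)^ν *
        (((a-x)/2)^(2*(m:ℝ)+ν) / (Real.Gamma ((m:ℝ)+1) * Real.Gamma ((m:ℝ)+ν+1)))) :=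
      (besselI_summable' hν' hax).mul_left _
    have hnn1 : 0 ≤ (fun k : ℕ => x^μ *
        ((x/2)^(2*(k:ℝ)+μ) / (Real.Gamma ((k:ℝ)+1) * Real.Gamma ((k:ℝ)+μ+1)))) := by
      intro k
      have g1 : 0 < Real.Gamma ((k:ℝ)+1) := Real.Gamma_pos_of_pos (by positivity)
      have g2 : 0 < Real.Gamma ((k:ℝ)+μ+1) :=
        Real.Gamma_pos_of_pos (by have := Nat.cast_nonneg (α := ℝ) k; linarith)
      have p1 : (0:ℝ) ≤ x^μ := Real.rpow_nonneg hx0.le _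
      have p2 : (0:ℝ) ≤ (x/2)^(2*(k:ℝ)+μ) := Real.rpow_nonneg (by linarith) _
      positivity
    have hnn2 : 0 ≤ (fun m : ℕ => (a-x)^ν *
        (((a-x)/2)^(2*(m:ℝ)+ν) / (Real.Gamma ((m:ℝ)+1) * Real.Gamma ((m:ℝ)+ν+1)))) := by
      intro m
      have g1 : 0 < Real.Gamma ((m:ℝ)+1) := Real.Gamma_pos_of_pos (by positivity)
      have g2 : 0 < Real.Gamma ((m:ℝ)+ν+1) :=
        Real.Gamma_pos_of_pos (by have := Nat.cast_nonneg (α := ℝ) m; linarith)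
      have p1 : (0:ℝ) ≤ (a-x)^ν := Real.rpow_nonneg hax.le _
      have p2 : (0:ℝ) ≤ ((a-x)/2)^(2*(m:ℝ)+ν) := Real.rpow_nonneg (by linarith) _
      positivity
    have hprod := S1.mul_of_nonneg S2 hnn1 hnn2
    simp only
    calc x ^ μ * (a - x) ^ ν * besselI μ x * besselI ν (a - x)
        = (x^μ * besselI μ x) * ((a-x)^ν * besselI ν (a-x)) := by ring
      _ = (∑' k : ℕ, x^μ *
            ((x/2)^(2*(k:ℝ)+μ) / (Real.Gamma ((k:ℝ)+1) * Real.Gamma ((k:ℝ)+μ+1))))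
          * (∑' m : ℕ, (a-x)^ν *
            (((a-x)/2)^(2*(m:ℝ)+ν) / (Real.Gamma ((m:ℝ)+1) * Real.Gamma ((m:ℝ)+ν+1)))) := by
          simp only [besselI]
          rw [tsum_mul_left, tsum_mul_left]
      _ = ∑' p : ℕ×ℕ, (x^μ *
            ((x/2)^(2*(p.1:ℝ)+μ) / (Real.Gamma ((p.1:ℝ)+1) * Real.Gamma ((p.1:ℝ)+μ+1))))
          * ((a-x)^ν *
            (((a-x)/2)^(2*(p.2:ℝ)+ν) / (Real.Gamma ((p.2:ℝ)+1) * Real.Gamma ((p.2:ℝ)+ν+1)))) :=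
          Summable.tsum_mul_tsum S1 S2 hprod
      _ = ∑' p : ℕ×ℕ, F p x := by
          apply tsum_congr
          intro p
          rw [term_mul hx0 p.1, term_mul hax p.2, hF]
          ring
  -- summability of the integrals of norms
  have hFnormval : ∀ p : ℕ×ℕ, ∫ x in Set.Ioo 0 a, ‖F p x‖ = G p := by
    intro p
    rw [← hFval p]
    apply MeasureTheory.setIntegral_congr_fun measurableSet_Ioo
    intro x hx
    obtain ⟨hx0, hxa⟩ := hx
    have g1 : 0 < Real.Gamma ((p.1:ℝ)+1) := Real.Gamma_pos_of_pos (by positivity)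
    have g2 : 0 < Real.Gamma ((p.1:ℝ)+μ+1) :=
      Real.Gamma_pos_of_pos (by have := Nat.cast_nonneg (α := ℝ) p.1; linarith)
    have g3 : 0 < Real.Gamma ((p.2:ℝ)+1) := Real.Gamma_pos_of_pos (by positivity)
    have g4 : 0 < Real.Gamma ((p.2:ℝ)+ν+1) :=
      Real.Gamma_pos_of_pos (by have := Nat.cast_nonneg (α := ℝ) p.2; linarith)
    have p1 : (0:ℝ) ≤ x^(2*(p.1:ℝ)+2*μ) := Real.rpow_nonneg hx0.le _
    have p2 : (0:ℝ) ≤ (a-x)^(2*(p.2:ℝ)+2*ν) := Real.rpow_nonneg (by linarith) _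
    have h21 : (0:ℝ) < 2^(2*(p.1:ℝ)+μ) := by positivity
    have h22 : (0:ℝ) < 2^(2*(p.2:ℝ)+ν) := by positivity
    have : 0 ≤ F p x := by
      rw [hF]
      positivity
    exact Real.norm_of_nonneg this
  have hnormint : Summable (fun p : ℕ×ℕ => ∫ x in Set.Ioo 0 a, ‖F p x‖) :=
    Summable.congr hGsum (fun p => (hFnormval p).symm)
  -- the series identity on the Bessel side
  have hseries : (fun k : ℕ => ((a:ℝ)^2/4)^k
      / (Real.Gamma ((k:ℝ)+1) * Real.Gamma ((k:ℝ)+((μ+ν+1/2)+1)))) = S := by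
    funext k
    rw [hS, show ((μ+ν+1/2)+1 : ℝ) = (μ+ν+1)+1/2 by ring]
  -- the constant identity
  have hconst : Real.Gamma (μ + 1 / 2) * Real.Gamma (ν + 1 / 2) /
        (Real.sqrt (2 * π) * Real.Gamma (μ + ν + 1)) *
      a ^ (μ + ν + 1 / 2) * (a/2)^(μ+ν+1/2)
      = ((a^(2*μ+2*ν+1) / ((2:ℝ)^(μ+ν+1) * Real.sqrt π))
          * (Real.Gamma (μ+1/2) * Real.Gamma (ν+1/2) / Real.Gamma (μ+ν+1))) := by
    have h1 : ((a:ℝ)/2)^(μ+ν+1/2) = a^(μ+ν+1/2) / 2^(μ+ν+1/2) :=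
      Real.div_rpow ha.le (by norm_num) _
    have h2 : a^(μ+ν+(1:ℝ)/2) * a^(μ+ν+(1:ℝ)/2) = a^(2*μ+2*ν+1) := by
      rw [← Real.rpow_add ha]; ring_nf
    have h3 : Real.sqrt (2*π) = Real.sqrt 2 * Real.sqrt π := Real.sqrt_mul (by norm_num) π
    have h4 : (2:ℝ)^(μ+ν+1/2) * Real.sqrt 2 = 2^(μ+ν+1) := by
      rw [Real.sqrt_eq_rpow, ← Real.rpow_add two_pos]
      congr 1
      ring
    have n1 : Real.sqrt 2 ≠ 0 := by positivity
    have n2 : Real.sqrt π ≠ 0 := by positivity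
    have n3 : Real.Gamma (μ+ν+1) ≠ 0 := (Real.Gamma_pos_of_pos (by linarith)).ne'
    have n4 : (2:ℝ)^(μ+ν+1/2) ≠ 0 := by positivity
    rw [h1, h3, ← h2, ← h4]
    field_simp
  -- final computation
  calc ∫ x in (0:ℝ)..a, x ^ μ * (a - x) ^ ν * besselI μ x * besselI ν (a - x)
      = ∫ x in Set.Ioc 0 a, x ^ μ * (a - x) ^ ν * besselI μ x * besselI ν (a - x) :=
        intervalIntegral.integral_of_le ha.le
    _ = ∫ x in Set.Ioo 0 a, x ^ μ * (a - x) ^ ν * besselI μ x * besselI ν (a - x) :=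
        MeasureTheory.integral_Ioc_eq_integral_Ioo
    _ = ∫ x in Set.Ioo 0 a, ∑' p : ℕ×ℕ, F p x :=
        MeasureTheory.setIntegral_congr_fun measurableSet_Ioo hpt
    _ = ∑' p : ℕ×ℕ, ∫ x in Set.Ioo 0 a, F p x :=
        (MeasureTheory.integral_tsum_of_summable_integral_norm hFint hnormint).symm
    _ = ∑' p : ℕ×ℕ, G p := tsum_congr hFval
    _ = ((a^(2*μ+2*ν+1) / ((2:ℝ)^(μ+ν+1) * Real.sqrt π))
          * (Real.Gamma (μ+1/2) * Real.Gamma (ν+1/2) / Real.Gamma (μ+ν+1))) * ∑' n, S n :=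
        hGtsum
    _ = Real.Gamma (μ + 1 / 2) * Real.Gamma (ν + 1 / 2) /
          (Real.sqrt (2 * π) * Real.Gamma (μ + ν + 1)) *
        a ^ (μ + ν + 1 / 2) * besselI (μ + ν + 1 / 2) a := by
        rw [besselI_eq ha, hseries, ← hconst]
        ring
end

section
/- For all real μ > 0, ν > 0 and every a > 0, ∫_0^a (I_μ(x)/x) · (I_ν(a−x)/(a−x)) dx = (1/μ + 1/ν) · I_{μ+ν}(a)/a. -/
open MeasureTheory Real

open PowerSeries Finset Polynomial Set


noncomputable def hq (k s : ℕ) : ℚ :=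
  (s + 1) * (2 * k + s).factorial / (k.factorial * (k + s + 1).factorial)

lemma coeff_catGF_one (n : ℕ) : (catalan n : ℚ) = hq n 0 := by
  have h1 : ((n+1) * catalan n : ℚ) = n.centralBinom := by
    exact_mod_cast congrArg (Nat.cast : ℕ → ℚ) (succ_mul_catalan_eq_centralBinom n)
  have h2 : (n.centralBinom * (n.factorial * n.factorial) : ℚ) = (2*n).factorial := by
    have := Nat.choose_mul_factorial_mul_factorial (Nat.le_add_left n n)
    rw [Nat.add_sub_cancel] at this
    have h2' : n.centralBinom * (n.factorial * n.factorial) = (2*n).factorial := by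
      rw [Nat.centralBinom, two_mul, ← mul_assoc]; exact this
    exact_mod_cast congrArg (Nat.cast : ℕ → ℚ) h2'
  have hf : ∀ m : ℕ, (0:ℚ) < m.factorial := fun m => by exact_mod_cast m.factorial_pos
  rw [hq]
  simp only [Nat.add_zero, Nat.zero_add]
  rw [eq_div_iff (by positivity)]
  push_cast [Nat.factorial_succ]
  push_cast at h1 h2
  nlinarith [hf n, h1, h2]

lemma hq_step (m s : ℕ) : hq (m+1) (s+1) = hq (m+1) s + hq m (s+2) := by
  have hf : ∀ k : ℕ, (0:ℚ) < k.factorial := fun k => by exact_mod_cast k.factorial_pos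
  rw [hq, hq, hq]
  have e1 : 2 * (m+1) + (s+1) = (2*m+s+2) + 1 := by ring
  have e2 : 2 * (m+1) + s = 2*m+s+2 := by ring
  have e3 : 2 * m + (s+2) = 2*m+s+2 := by ring
  have e4 : (m+1) + (s+1) + 1 = (m+s+2)+1 := by ring
  have e5 : (m+1) + s + 1 = m+s+2 := by ring
  have e6 : m + (s+2) + 1 = (m+s+2)+1 := by ring
  rw [e1, e2, e3, e4, e5, e6]
  rw [Nat.factorial_succ ((2*m+s+2)), Nat.factorial_succ (m+s+2), Nat.factorial_succ m]
  field_simp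
  push_cast
  ring

lemma hq_zero (s : ℕ) : hq 0 s = 1 := by
  rw [hq]
  simp only [Nat.mul_zero, Nat.zero_add, Nat.factorial_zero]
  rw [Nat.factorial_succ]
  have hf : (0:ℚ) < s.factorial := by exact_mod_cast s.factorial_pos
  field_simp
  push_cast
  ring

noncomputable def catGF : PowerSeries ℚ := PowerSeries.mk fun n => (catalan n : ℚ)

lemma catGF_eq : catGF = 1 + PowerSeries.X * catGF ^ 2 := by
  ext n
  cases n with
  | zero => simp [catGF]
  | succ n =>
    rw [map_add, PowerSeries.coeff_succ_X_mul]
    simp only [catGF, coeff_mk, pow_two, PowerSeries.coeff_mul, PowerSeries.coeff_one, Nat.succ_ne_zero,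
      if_false, zero_add, catalan_succ']
    push_cast
    rfl

lemma catGF_pow_succ (m : ℕ) :
    catGF ^ (m + 1) = catGF ^ m + PowerSeries.X * catGF ^ (m + 2) := by
  calc catGF ^ (m+1) = catGF ^ m * catGF := by ring
  _ = catGF ^ m * (1 + PowerSeries.X * catGF ^ 2) := by rw [← catGF_eq]
  _ = catGF ^ m + PowerSeries.X * catGF ^ (m + 2) := by ring

lemma coeff_catGF_pow : ∀ n s : ℕ, PowerSeries.coeff n (catGF ^ (s + 1)) = hq n s := by
  intro n
  induction n using Nat.strong_induction_on with
  | _ n ih =>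
    match n with
    | 0 =>
      intro s
      rw [hq_zero, PowerSeries.coeff_zero_eq_constantCoeff, map_pow]
      simp [catGF]
    | (m+1) =>
      intro s
      induction s with
      | zero =>
        rw [pow_one]
        simpa [catGF] using coeff_catGF_one (m+1)
      | succ s ihs =>
        have hrec := congrArg (PowerSeries.coeff (m+1)) (catGF_pow_succ (s+1))
        rw [map_add, PowerSeries.coeff_succ_X_mul] at hrec
        rw [hrec, ihs, ih m (Nat.lt_succ_self m) (s+2), hq_step]

theorem rothe_nat (n s t : ℕ) :
    ∑ kl ∈ antidiagonal n, hq kl.1 s * hq kl.2 t = hq n (s + t + 1) := by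
  have h : catGF ^ (s + 1) * catGF ^ (t + 1) = catGF ^ ((s + t + 1) + 1) := by
    rw [← pow_add]; ring_nf
  have := congrArg (PowerSeries.coeff n) h
  rw [PowerSeries.coeff_mul, coeff_catGF_pow] at this
  rw [← this]
  exact Finset.sum_congr rfl fun kl _ => by rw [coeff_catGF_pow, coeff_catGF_pow]

noncomputable def hP : ℕ → Polynomial ℝ
  | 0 => 1
  | (k+1) => (((k+1).factorial : ℝ)⁻¹) •
      (Polynomial.X * (ascPochhammer ℝ k).comp (Polynomial.X + Polynomial.C ((k:ℝ)+2)))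

lemma Gamma_add_nat (r : ℝ) (hr : 0 < r) (n : ℕ) :
    Real.Gamma (r + n) = Real.Gamma r * (ascPochhammer ℝ n).eval r := by
  induction n with
  | zero => simp
  | succ n ih =>
    have h1 : r + (n+1:ℕ) = (r + n) + 1 := by push_cast; ring
    rw [h1, Real.Gamma_add_one (by positivity), ih, ascPochhammer_succ_right]
    simp [Polynomial.eval_mul]
    ring

lemma hP_eval_gamma (k : ℕ) (r : ℝ) (hr : 0 < r) :
    (hP k).eval r = r * Real.Gamma (2*(k:ℝ) + r) / (k.factorial * Real.Gamma ((k:ℝ) + r + 1)) := by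
  cases k with
  | zero =>
    simp only [hP, Nat.cast_zero, Nat.factorial_zero, Nat.cast_one, one_mul, eval_one]
    rw [show (2:ℝ)*0 + r = r by ring, show (0:ℝ) + r + 1 = r + 1 by ring,
      Real.Gamma_add_one hr.ne']
    field_simp [Real.Gamma_pos_of_pos hr]
  | succ k =>
    have hpos : (0:ℝ) < Real.Gamma (r + (k:ℝ) + 2) := Real.Gamma_pos_of_pos (by positivity)
    have h1 : 2*((k:ℝ)+1) + r = (r + (k:ℝ) + 2) + (k:ℕ) := by push_cast; ring
    have h2 : ((k:ℝ)+1) + r + 1 = r + (k:ℝ) + 2 := by ring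
    rw [hP]
    simp only [eval_smul, eval_mul, eval_X, eval_comp, eval_add, eval_C, smul_eq_mul]
    push_cast
    rw [h1, h2, Gamma_add_nat (r + (k:ℝ) + 2) (by positivity) k]
    rw [show r + (k:ℝ) + 2 = r + ((k:ℝ) + 2) by ring]
    field_simp

lemma hP_eval_nat (k s : ℕ) : (hP k).eval ((s:ℝ)+1) = (hq k s : ℝ) := by
  rw [hP_eval_gamma k _ (by positivity)]
  have h1 : 2*(k:ℝ) + ((s:ℝ)+1) = ((2*k+s : ℕ):ℝ) + 1 := by push_cast; ring
  have h2 : (k:ℝ) + ((s:ℝ)+1) + 1 = ((k+s+1 : ℕ):ℝ) + 1 := by push_cast; ring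
  rw [h1, h2, Real.Gamma_nat_eq_factorial, Real.Gamma_nat_eq_factorial, hq]
  push_cast
  ring

lemma rothe_real (n : ℕ) (x y : ℝ) :
    ∑ kl ∈ antidiagonal n, (hP kl.1).eval x * (hP kl.2).eval y = (hP n).eval (x+y) := by
  have hinj : ∀ P Q : Polynomial ℝ, (∀ t : ℕ, P.eval ((t:ℝ)+1) = Q.eval ((t:ℝ)+1)) → P = Q := by
    intro P Q h
    apply Polynomial.eq_of_infinite_eval_eq
    apply Set.Infinite.mono (s := Set.range (fun t : ℕ => (t:ℝ)+1))
    · rintro _ ⟨t, rfl⟩; exact h t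
    · apply Set.infinite_range_of_injective
      intro a b hab
      field_simp at hab
      exact_mod_cast add_right_cancel hab
  -- Step A : for x = s+1 with s : ℕ
  have stepA : ∀ (s : ℕ) (y : ℝ),
      ∑ kl ∈ antidiagonal n, (hP kl.1).eval ((s:ℝ)+1) * (hP kl.2).eval y
        = (hP n).eval (((s:ℝ)+1)+y) := by
    intro s y
    have hPQ : (∑ kl ∈ antidiagonal n, Polynomial.C ((hP kl.1).eval ((s:ℝ)+1)) * hP kl.2)
        = (hP n).comp (Polynomial.X + Polynomial.C ((s:ℝ)+1)) := by
      apply hinj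
      intro t
      rw [Polynomial.eval_finset_sum]
      simp only [eval_mul, eval_C, eval_comp, eval_add, eval_X]
      have : ∀ kl ∈ antidiagonal n,
          (hP kl.1).eval ((s:ℝ)+1) * (hP kl.2).eval ((t:ℝ)+1)
            = ((hq kl.1 s * hq kl.2 t : ℚ) : ℝ) := by
        intro kl _
        rw [hP_eval_nat, hP_eval_nat]; push_cast; ring
      rw [Finset.sum_congr rfl this, ← Rat.cast_sum, rothe_nat]
      have h3 : (t:ℝ)+1 + ((s:ℝ)+1) = ((s+t+1 : ℕ):ℝ) + 1 := by push_cast; ring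
      rw [h3, hP_eval_nat]
    have := congrArg (Polynomial.eval y) hPQ
    rw [Polynomial.eval_finset_sum] at this
    simp only [eval_mul, eval_C, eval_comp, eval_add, eval_X] at this
    rw [this]
    ring_nf
  -- Step B : general x
  have hPQ : (∑ kl ∈ antidiagonal n, hP kl.1 * Polynomial.C ((hP kl.2).eval y))
      = (hP n).comp (Polynomial.X + Polynomial.C y) := by
    apply hinj
    intro s
    rw [Polynomial.eval_finset_sum]
    simp only [eval_mul, eval_C, eval_comp, eval_add, eval_X]
    exact stepA s y
  have := congrArg (Polynomial.eval x) hPQ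
  rw [Polynomial.eval_finset_sum] at this
  simp only [eval_mul, eval_C, eval_comp, eval_add, eval_X] at this
  rw [this]

lemma betaR_integrable {p q b : ℝ} (hp : 0 < p) (hq : 0 < q) (hb : 0 < b) :
    IntervalIntegrable (fun x => x ^ (p-1) * (b-x) ^ (q-1)) volume 0 b := by
  have h1 : IntervalIntegrable (fun x => x ^ (p-1) * (b-x) ^ (q-1)) volume 0 (b/2) := by
    apply IntervalIntegrable.mul_continuousOn
    · exact intervalIntegral.intervalIntegrable_rpow' (by linarith)
    · intro x hx
      rw [Set.uIcc_of_le (by linarith)] at hx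
      apply ContinuousAt.continuousWithinAt
      exact (continuous_const.sub continuous_id).continuousAt.rpow_const
        (Or.inl (by show b - x ≠ 0; intro h; rw [Set.mem_Icc] at hx; nlinarith [hx.1, hx.2]))
  have h2 : IntervalIntegrable (fun x => x ^ (p-1) * (b-x) ^ (q-1)) volume (b/2) b := by
    apply IntervalIntegrable.continuousOn_mul
    · have base : IntervalIntegrable (fun x : ℝ => x ^ (q-1)) volume 0 (b/2) :=
        intervalIntegral.intervalIntegrable_rpow' (by linarith)
      have := (base.comp_sub_left b).symm
      rw [show b - b/2 = b/2 by ring, show b - 0 = b by ring] at this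
      exact this
    · intro x hx
      rw [Set.uIcc_of_le (by linarith)] at hx
      apply ContinuousAt.continuousWithinAt
      exact continuousAt_id.rpow_const
        (Or.inl (by simp only [id_eq]; intro h; rw [Set.mem_Icc] at hx; nlinarith [hx.1, hx.2]))
  exact h1.trans h2

lemma betaR_value {p q b : ℝ} (hp : 0 < p) (hq : 0 < q) (hb : 0 < b) :
    ∫ x in (0:ℝ)..b, x ^ (p-1) * (b-x) ^ (q-1)
      = b ^ (p+q-1) * (Real.Gamma p * Real.Gamma q / Real.Gamma (p+q)) := by
  have hgne : Complex.Gamma ((p:ℂ) + q) ≠ 0 := by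
    rw [show ((p:ℂ) + q) = ((p + q : ℝ) : ℂ) by push_cast; ring, Complex.Gamma_ofReal]
    exact_mod_cast (Real.Gamma_pos_of_pos (by linarith)).ne'
  have hbeta : Complex.betaIntegral p q
      = Complex.Gamma p * Complex.Gamma q / Complex.Gamma ((p:ℂ) + q) := by
    rw [eq_div_iff hgne, mul_comm]
    exact (Complex.Gamma_mul_Gamma_eq_betaIntegral (by simpa using hp) (by simpa using hq)).symm
  have hscaled := Complex.betaIntegral_scaled (p:ℂ) (q:ℂ) hb
  have hcongr : (∫ x in (0:ℝ)..b, (x:ℂ) ^ ((p:ℂ) - 1) * ((b:ℂ) - (x:ℂ)) ^ ((q:ℂ) - 1))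
      = ((∫ x in (0:ℝ)..b, x ^ (p-1) * (b-x) ^ (q-1) : ℝ) : ℂ) := by
    rw [← intervalIntegral.integral_ofReal]
    apply intervalIntegral.integral_congr
    intro x hx
    rw [Set.uIcc_of_le hb.le, Set.mem_Icc] at hx
    simp only []
    rw [Complex.ofReal_mul, Complex.ofReal_cpow hx.1,
      Complex.ofReal_cpow (by linarith : (0:ℝ) ≤ b - x)]
    push_cast
    ring
  rw [hcongr, hbeta] at hscaled
  have hrhs : ((b:ℂ)) ^ ((p:ℂ) + q - 1)
        * (Complex.Gamma p * Complex.Gamma q / Complex.Gamma ((p:ℂ)+q))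
      = ((b ^ (p+q-1) * (Real.Gamma p * Real.Gamma q / Real.Gamma (p+q)) : ℝ) : ℂ) := by
    rw [show ((p:ℂ) + q - 1) = ((p + q - 1 : ℝ) : ℂ) by push_cast; ring,
      ← Complex.ofReal_cpow hb.le,
      show ((p:ℂ) + q) = ((p + q : ℝ) : ℂ) by push_cast; ring]
    rw [Complex.Gamma_ofReal, Complex.Gamma_ofReal, Complex.Gamma_ofReal]
    push_cast
    ring
  rw [hrhs] at hscaled
  exact_mod_cast hscaled

lemma Gamma_add_nat' (r : ℝ) (hr : 0 < r) (n : ℕ) :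
    Real.Gamma (r + n) = Real.Gamma r * (ascPochhammer ℝ n).eval r := by
  induction n with
  | zero => simp
  | succ n ih =>
    have h1 : r + (n+1:ℕ) = (r + n) + 1 := by push_cast; ring
    rw [h1, Real.Gamma_add_one (by positivity), ih, ascPochhammer_succ_right]
    simp [Polynomial.eval_mul]
    ring

lemma ascPochhammer_ge_factorial {z : ℝ} (hz : 1 ≤ z) (k : ℕ) :
    (k.factorial : ℝ) ≤ (ascPochhammer ℝ k).eval z := by
  induction k with
  | zero => simp
  | succ k ih =>
    rw [ascPochhammer_succ_right, Nat.factorial_succ]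
    simp only [Polynomial.eval_mul, Polynomial.eval_add, Polynomial.eval_X,
      Polynomial.eval_natCast]
    push_cast
    have h1 : (0:ℝ) < k.factorial := by exact_mod_cast k.factorial_pos
    nlinarith [ih, h1]

/-- `Γ(k + r + 1) ≥ Γ(r+1) k!`. -/
lemma Gamma_lower (r : ℝ) (hr : 0 < r) (k : ℕ) :
    Real.Gamma (r+1) * k.factorial ≤ Real.Gamma ((k:ℝ) + r + 1) := by
  have h := Gamma_add_nat' (r+1) (by linarith) k
  rw [show (k:ℝ) + r + 1 = (r + 1) + k by ring, h]
  have := ascPochhammer_ge_factorial (by linarith : (1:ℝ) ≤ r + 1) k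
  nlinarith [Real.Gamma_pos_of_pos (show (0:ℝ) < r+1 by linarith)]

set_option maxHeartbeats 1000000 in
lemma summable_aux_s3 {r y : ℝ} (hr : 0 < r) (hy : 0 < y) :
    Summable (fun k : ℕ => y ^ (2*(k:ℝ) + r) / (Real.Gamma ((k:ℝ)+1) * Real.Gamma ((k:ℝ) + r + 1))) := by
  have hG1 : (0:ℝ) < Real.Gamma (r+1) := Real.Gamma_pos_of_pos (by linarith)
  apply Summable.of_nonneg_of_le (f := fun k : ℕ => (y^r / Real.Gamma (r+1)) * ((y^2)^k / k.factorial))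
  · intro k
    positivity
  · intro k
    have hfk : (0:ℝ) < k.factorial := by exact_mod_cast k.factorial_pos
    have hGk1 : Real.Gamma ((k:ℝ)+1) = k.factorial := by
      rw [show ((k:ℝ)+1) = ((k:ℕ):ℝ) + 1 by norm_num, Real.Gamma_nat_eq_factorial]
    have hsplit : y ^ (2*(k:ℝ) + r) = y^r * (y^2)^k := by
      rw [show 2*(k:ℝ) + r = r + (2*k:ℕ) by push_cast; ring, Real.rpow_add hy,
        Real.rpow_natCast]
      ring
    rw [hsplit, hGk1]
    have hrhs : y^r / Real.Gamma (r+1) * ((y^2)^k / k.factorial)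
        = y^r * (y^2)^k / (Real.Gamma (r+1) * k.factorial) := by ring
    rw [hrhs]
    apply div_le_div_of_nonneg_left (by positivity) (by positivity)
    have h1 : (1:ℝ) ≤ k.factorial := by exact_mod_cast k.factorial_pos
    have hGlow := Gamma_lower r hr k
    have h2 : Real.Gamma ((k:ℝ)+r+1) ≤ k.factorial * Real.Gamma ((k:ℝ)+r+1) :=
      le_mul_of_one_le_left (le_of_lt (Real.Gamma_pos_of_pos (by positivity))) h1
    linarith
  · exact ((Real.summable_pow_div_factorial (y^2)).mul_left _)

noncomputable def cc (r : ℝ) (k : ℕ) : ℝ :=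
  1 / ((2:ℝ) ^ (2*(k:ℝ)+r) * k.factorial * Real.Gamma ((k:ℝ)+r+1))

lemma cc_pos (r : ℝ) (hr : 0 < r) (k : ℕ) : 0 < cc r k := by
  rw [cc]
  have h2 : (0:ℝ) < (2:ℝ) ^ (2*(k:ℝ)+r) := Real.rpow_pos_of_pos (by norm_num) _
  have hfk : (0:ℝ) < k.factorial := by exact_mod_cast k.factorial_pos
  have hg : (0:ℝ) < Real.Gamma ((k:ℝ)+r+1) := Real.Gamma_pos_of_pos (by positivity)
  positivity

lemma cc_term (r x : ℝ) (hr : 0 < r) (hx : 0 < x) (k : ℕ) :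
    (x/2) ^ (2*(k:ℝ)+r) / (Real.Gamma ((k:ℝ)+1) * Real.Gamma ((k:ℝ)+r+1)) / x
      = cc r k * x ^ (2*(k:ℝ)+r-1) := by
  have hgk : Real.Gamma ((k:ℝ)+1) = k.factorial := by
    rw [show ((k:ℝ)+1) = ((k:ℕ):ℝ) + 1 by norm_num, Real.Gamma_nat_eq_factorial]
  have hdiv : (x/2) ^ (2*(k:ℝ)+r) = x ^ (2*(k:ℝ)+r) / (2:ℝ) ^ (2*(k:ℝ)+r) :=
    Real.div_rpow hx.le (by norm_num : (0:ℝ) ≤ 2) _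
  have hsub : x ^ (2*(k:ℝ)+r-1) = x ^ (2*(k:ℝ)+r) / x ^ (1:ℝ) := Real.rpow_sub hx _ _
  have h2 : (0:ℝ) < (2:ℝ) ^ (2*(k:ℝ)+r) := Real.rpow_pos_of_pos (by norm_num) _
  have hfk : (0:ℝ) < k.factorial := by exact_mod_cast k.factorial_pos
  have hg : (0:ℝ) < Real.Gamma ((k:ℝ)+r+1) := Real.Gamma_pos_of_pos (by positivity)
  rw [hgk, hdiv, hsub, Real.rpow_one, cc]
  field_simp [mul_assoc]

lemma besselI_div (r x : ℝ) (hr : 0 < r) (hx : 0 < x) :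
    besselI r x / x = ∑' k : ℕ, cc r k * x ^ (2*(k:ℝ)+r-1) := by
  rw [besselI, ← tsum_div_const]
  exact tsum_congr (cc_term r x hr hx)

lemma summable_cc (r x : ℝ) (hr : 0 < r) (hx : 0 < x) :
    Summable (fun k : ℕ => cc r k * x ^ (2*(k:ℝ)+r-1)) := by
  have := (summable_aux_s3 hr (show (0:ℝ) < x/2 by linarith)).div_const x
  exact this.congr (cc_term r x hr hx)

lemma cc_pow_term (r b : ℝ) (hr : 0 < r) (hb : 0 < b) (k : ℕ) :
    (b/2) ^ (2*(k:ℝ)+r) / (Real.Gamma ((k:ℝ)+1) * Real.Gamma ((k:ℝ)+r+1)) / b ^ r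
      = cc r k * b ^ (2*(k:ℝ)) := by
  have hgk : Real.Gamma ((k:ℝ)+1) = k.factorial := by
    rw [show ((k:ℝ)+1) = ((k:ℕ):ℝ) + 1 by norm_num, Real.Gamma_nat_eq_factorial]
  have hdiv : (b/2) ^ (2*(k:ℝ)+r) = b ^ (2*(k:ℝ)+r) / (2:ℝ) ^ (2*(k:ℝ)+r) :=
    Real.div_rpow hb.le (by norm_num : (0:ℝ) ≤ 2) _
  have hadd : b ^ (2*(k:ℝ)+r) = b ^ (2*(k:ℝ)) * b ^ r := Real.rpow_add hb _ _
  have h2 : (0:ℝ) < (2:ℝ) ^ (2*(k:ℝ)+r) := Real.rpow_pos_of_pos (by norm_num) _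
  have hfk : (0:ℝ) < k.factorial := by exact_mod_cast k.factorial_pos
  have hg : (0:ℝ) < Real.Gamma ((k:ℝ)+r+1) := Real.Gamma_pos_of_pos (by positivity)
  have hbr : (0:ℝ) < b ^ r := Real.rpow_pos_of_pos hb _
  rw [hgk, hdiv, hadd, cc]
  field_simp

lemma summable_u (r b : ℝ) (hr : 0 < r) (hb : 0 < b) :
    Summable (fun k : ℕ => cc r k * b ^ (2*(k:ℝ))) := by
  have := (summable_aux_s3 hr (show (0:ℝ) < b/2 by linarith)).div_const (b ^ r)
  exact this.congr (cc_pow_term r b hr hb)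

noncomputable def TT (μ ν a : ℝ) (p : ℕ × ℕ) (x : ℝ) : ℝ :=
  cc μ p.1 * x ^ (2*(p.1:ℝ)+μ-1) * (cc ν p.2 * (a-x) ^ (2*(p.2:ℝ)+ν-1))

noncomputable def WW (μ ν a : ℝ) (p : ℕ × ℕ) : ℝ :=
  cc μ p.1 * cc ν p.2 *
    (a ^ ((2*(p.1:ℝ)+μ) + (2*(p.2:ℝ)+ν) - 1) *
      (Real.Gamma (2*(p.1:ℝ)+μ) * Real.Gamma (2*(p.2:ℝ)+ν) /
        Real.Gamma ((2*(p.1:ℝ)+μ) + (2*(p.2:ℝ)+ν))))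

variable {μ ν a : ℝ}

lemma TT_key (hμ : 0 < μ) (hν : 0 < ν) (ha : 0 < a) {x : ℝ} (hx : x ∈ Set.Ioo 0 a) :
    besselI μ x / x * (besselI ν (a-x) / (a-x)) = ∑' p : ℕ × ℕ, TT μ ν a p x := by
  obtain ⟨hx1, hx2⟩ := hx
  have hax : 0 < a - x := by linarith
  have s1 : Summable (fun k : ℕ => ‖cc μ k * x ^ (2*(k:ℝ)+μ-1)‖) :=
    (summable_cc μ x hμ hx1).congr fun k => (Real.norm_of_nonneg
      (mul_nonneg (cc_pos μ hμ k).le (Real.rpow_nonneg hx1.le _))).symm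
  have s2 : Summable (fun k : ℕ => ‖cc ν k * (a-x) ^ (2*(k:ℝ)+ν-1)‖) :=
    (summable_cc ν (a-x) hν hax).congr fun k => (Real.norm_of_nonneg
      (mul_nonneg (cc_pos ν hν k).le (Real.rpow_nonneg hax.le _))).symm
  rw [besselI_div μ x hμ hx1, besselI_div ν (a-x) hν hax,
    tsum_mul_tsum_of_summable_norm s1 s2]
  rfl

lemma TT_rearrange (p : ℕ × ℕ) : TT μ ν a p = fun x =>
    (cc μ p.1 * cc ν p.2) * (x ^ (2*(p.1:ℝ)+μ-1) * (a-x) ^ (2*(p.2:ℝ)+ν-1)) := by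
  funext x; rw [TT]; ring

lemma TT_int (hμ : 0 < μ) (hν : 0 < ν) (ha : 0 < a) (p : ℕ × ℕ) :
    IntegrableOn (TT μ ν a p) (Set.Ioo 0 a) := by
  have base := betaR_integrable (p := 2*(p.1:ℝ)+μ) (q := 2*(p.2:ℝ)+ν)
    (by positivity) (by positivity) ha
  rw [TT_rearrange]
  exact ((base.1.mono_set Set.Ioo_subset_Ioc_self).const_mul _)

lemma TT_val (hμ : 0 < μ) (hν : 0 < ν) (ha : 0 < a) (p : ℕ × ℕ) :
    ∫ x in Set.Ioo 0 a, TT μ ν a p x = WW μ ν a p := by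
  rw [show ∫ x in Set.Ioo 0 a, TT μ ν a p x = ∫ x in Set.Ioc 0 a, TT μ ν a p x from
    (MeasureTheory.integral_Ioc_eq_integral_Ioo).symm,
    ← intervalIntegral.integral_of_le ha.le]
  simp only [TT_rearrange]
  rw [intervalIntegral.integral_const_mul,
    betaR_value (p := 2*(p.1:ℝ)+μ) (q := 2*(p.2:ℝ)+ν) (by positivity) (by positivity) ha, WW]

lemma TT_nonneg (hμ : 0 < μ) (hν : 0 < ν) {x : ℝ} (hx : x ∈ Set.Ioo 0 a) (p : ℕ × ℕ) :
    0 ≤ TT μ ν a p x := by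
  rw [TT]
  have h1 := (cc_pos μ hμ p.1).le
  have h2 := (cc_pos ν hν p.2).le
  have h3 := Real.rpow_nonneg hx.1.le (2*(p.1:ℝ)+μ-1)
  have h4 := Real.rpow_nonneg (by linarith [hx.2] : (0:ℝ) ≤ a - x) (2*(p.2:ℝ)+ν-1)
  positivity

lemma TT_norm_summable (hμ : 0 < μ) (hν : 0 < ν) (ha : 0 < a) :
    Summable (fun p : ℕ × ℕ => ∫ x in Set.Ioo 0 a, ‖TT μ ν a p x‖) := by
  set IB : ℝ := ∫ x in Set.Ioo 0 a, x ^ (μ-1) * (a-x) ^ (ν-1) with hIB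
  have hbase : IntegrableOn (fun x => x ^ (μ-1) * (a-x) ^ (ν-1)) (Set.Ioo 0 a) :=
    (betaR_integrable hμ hν ha).1.mono_set Set.Ioo_subset_Ioc_self
  apply Summable.of_nonneg_of_le
    (f := fun p : ℕ × ℕ => (cc μ p.1 * a ^ (2*(p.1:ℝ)) * (cc ν p.2 * a ^ (2*(p.2:ℝ)))) * IB)
  · intro p
    exact MeasureTheory.integral_nonneg fun x => norm_nonneg _
  · intro p
    have heq : ∫ x in Set.Ioo 0 a, ‖TT μ ν a p x‖ = ∫ x in Set.Ioo 0 a, TT μ ν a p x :=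
      MeasureTheory.setIntegral_congr_fun measurableSet_Ioo
        (fun x hx => Real.norm_of_nonneg (TT_nonneg hμ hν hx p))
    rw [heq]
    have hmono : ∀ x ∈ Set.Ioo 0 a, TT μ ν a p x ≤
        (cc μ p.1 * a ^ (2*(p.1:ℝ)) * (cc ν p.2 * a ^ (2*(p.2:ℝ)))) *
          (x ^ (μ-1) * (a-x) ^ (ν-1)) := by
      intro x hx
      obtain ⟨hx1, hx2⟩ := hx
      have hax : 0 < a - x := by linarith
      have e1 : x ^ (2*(p.1:ℝ)+μ-1) = x ^ (2*(p.1:ℝ)) * x ^ (μ-1) := by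
        rw [← Real.rpow_add hx1]; ring_nf
      have e2 : (a-x) ^ (2*(p.2:ℝ)+ν-1) = (a-x) ^ (2*(p.2:ℝ)) * (a-x) ^ (ν-1) := by
        rw [← Real.rpow_add hax]; ring_nf
      rw [TT, e1, e2]
      have b1 : x ^ (2*(p.1:ℝ)) ≤ a ^ (2*(p.1:ℝ)) :=
        Real.rpow_le_rpow hx1.le hx2.le (by positivity)
      have b2 : (a-x) ^ (2*(p.2:ℝ)) ≤ a ^ (2*(p.2:ℝ)) :=
        Real.rpow_le_rpow hax.le (by linarith) (by positivity)
      have hccμ := (cc_pos μ hμ p.1).le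
      have hccν := (cc_pos ν hν p.2).le
      have n1 : (0:ℝ) ≤ x ^ (μ-1) := Real.rpow_nonneg hx1.le _
      have n2 : (0:ℝ) ≤ (a-x) ^ (ν-1) := Real.rpow_nonneg hax.le _
      have n3 : (0:ℝ) ≤ x ^ (2*(p.1:ℝ)) := Real.rpow_nonneg hx1.le _
      have n4 : (0:ℝ) ≤ (a-x) ^ (2*(p.2:ℝ)) := Real.rpow_nonneg hax.le _
      calc cc μ p.1 * (x ^ (2*(p.1:ℝ)) * x ^ (μ-1)) *
            (cc ν p.2 * ((a-x) ^ (2*(p.2:ℝ)) * (a-x) ^ (ν-1)))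
          = (cc μ p.1 * cc ν p.2 * (x ^ (μ-1) * (a-x) ^ (ν-1))) *
              (x ^ (2*(p.1:ℝ)) * (a-x) ^ (2*(p.2:ℝ))) := by ring
        _ ≤ (cc μ p.1 * cc ν p.2 * (x ^ (μ-1) * (a-x) ^ (ν-1))) *
              (a ^ (2*(p.1:ℝ)) * a ^ (2*(p.2:ℝ))) := by
            apply mul_le_mul_of_nonneg_left _ (by positivity)
            exact mul_le_mul b1 b2 n4 (by positivity)
        _ = (cc μ p.1 * a ^ (2*(p.1:ℝ)) * (cc ν p.2 * a ^ (2*(p.2:ℝ)))) *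
              (x ^ (μ-1) * (a-x) ^ (ν-1)) := by ring
    calc ∫ x in Set.Ioo 0 a, TT μ ν a p x
        ≤ ∫ x in Set.Ioo 0 a, (cc μ p.1 * a ^ (2*(p.1:ℝ)) * (cc ν p.2 * a ^ (2*(p.2:ℝ)))) *
            (x ^ (μ-1) * (a-x) ^ (ν-1)) :=
          MeasureTheory.setIntegral_mono_on (TT_int hμ hν ha p) (hbase.const_mul _)
            measurableSet_Ioo hmono
      _ = (cc μ p.1 * a ^ (2*(p.1:ℝ)) * (cc ν p.2 * a ^ (2*(p.2:ℝ)))) * IB := by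
          rw [MeasureTheory.integral_const_mul, hIB]
  · exact ((summable_u μ a hμ ha).mul_of_nonneg (summable_u ν a hν ha)
      (fun k => mul_nonneg (cc_pos μ hμ k).le (Real.rpow_nonneg ha.le _))
      (fun k => mul_nonneg (cc_pos ν hν k).le (Real.rpow_nonneg ha.le _))).mul_right IB

lemma WW_antidiagonal_sum (hμ : 0 < μ) (hν : 0 < ν) (ha : 0 < a) (n : ℕ) :
    ∑ kl ∈ Finset.HasAntidiagonal.antidiagonal n, WW μ ν a kl
      = (1/μ + 1/ν) * ((a/2) ^ (2*(n:ℝ)+(μ+ν)) /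
          (Real.Gamma ((n:ℝ)+1) * Real.Gamma ((n:ℝ)+(μ+ν)+1))) / a := by
  have hμν : 0 < μ + ν := by linarith
  set E : ℝ := 2*(n:ℝ)+(μ+ν) with hE
  set D : ℝ := a ^ (E-1) / ((2:ℝ) ^ E * (μ*ν) * Real.Gamma E) with hD
  have h2E : (0:ℝ) < (2:ℝ) ^ E := Real.rpow_pos_of_pos (by norm_num) _
  have hGE : (0:ℝ) < Real.Gamma E := Real.Gamma_pos_of_pos (by positivity)
  have step1 : ∀ kl ∈ Finset.HasAntidiagonal.antidiagonal n,
      WW μ ν a kl = (hP kl.1).eval μ * (hP kl.2).eval ν * D := by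
    rintro ⟨k, l⟩ hkl
    rw [Finset.HasAntidiagonal.mem_antidiagonal] at hkl
    have hsum : (2*(k:ℝ)+μ) + (2*(l:ℝ)+ν) = E := by
      rw [hE]; push_cast [← hkl]; ring
    have hsplit : (2:ℝ) ^ (2*(k:ℝ)+μ) * (2:ℝ) ^ (2*(l:ℝ)+ν) = (2:ℝ) ^ E := by
      rw [← Real.rpow_add (by norm_num : (0:ℝ) < 2), hsum]
    rw [WW, hP_eval_gamma k μ hμ, hP_eval_gamma l ν hν, hD]
    simp only
    rw [hsum, cc, cc, ← hsplit]
    have hfk : (0:ℝ) < k.factorial := by exact_mod_cast k.factorial_pos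
    have hfl : (0:ℝ) < l.factorial := by exact_mod_cast l.factorial_pos
    have hQ1 : (0:ℝ) < Real.Gamma ((k:ℝ)+μ+1) := Real.Gamma_pos_of_pos (by positivity)
    have hQ2 : (0:ℝ) < Real.Gamma ((l:ℝ)+ν+1) := Real.Gamma_pos_of_pos (by positivity)
    have h2k : (0:ℝ) < (2:ℝ) ^ (2*(k:ℝ)+μ) := Real.rpow_pos_of_pos (by norm_num) _
    have h2l : (0:ℝ) < (2:ℝ) ^ (2*(l:ℝ)+ν) := Real.rpow_pos_of_pos (by norm_num) _
    field_simp
  rw [Finset.sum_congr rfl step1, ← Finset.sum_mul, rothe_real n μ ν,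
    hP_eval_gamma n (μ+ν) hμν]
  have hgn1 : Real.Gamma ((n:ℝ)+1) = n.factorial := by
    rw [show ((n:ℝ)+1) = ((n:ℕ):ℝ) + 1 by norm_num, Real.Gamma_nat_eq_factorial]
  have hfn : (0:ℝ) < n.factorial := by exact_mod_cast n.factorial_pos
  have hQ : (0:ℝ) < Real.Gamma ((n:ℝ)+(μ+ν)+1) := Real.Gamma_pos_of_pos (by positivity)
  have hdiv : (a/2) ^ E = a ^ E / (2:ℝ) ^ E := Real.div_rpow ha.le (by norm_num : (0:ℝ) ≤ 2) _
  have hsub : a ^ (E-1) = a ^ E / a := by rw [Real.rpow_sub ha, Real.rpow_one]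
  rw [hD, hgn1, hdiv, hsub]
  field_simp
  ring

lemma TT_norm_val (hμ : 0 < μ) (hν : 0 < ν) (ha : 0 < a) (p : ℕ × ℕ) :
    ∫ x in Set.Ioo 0 a, ‖TT μ ν a p x‖ = WW μ ν a p :=
  (MeasureTheory.setIntegral_congr_fun measurableSet_Ioo
    (fun x hx => Real.norm_of_nonneg (TT_nonneg hμ hν hx p))).trans (TT_val hμ hν ha p)

lemma WW_summable (hμ : 0 < μ) (hν : 0 < ν) (ha : 0 < a) : Summable (WW μ ν a) :=
  (TT_norm_summable hμ hν ha).congr (TT_norm_val hμ hν ha)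

lemma WW_regroup (hμ : 0 < μ) (hν : 0 < ν) (ha : 0 < a) :
    ∑' p : ℕ × ℕ, WW μ ν a p = ∑' n : ℕ, ∑ kl ∈ Finset.HasAntidiagonal.antidiagonal n, WW μ ν a kl := by
  rw [← Finset.HasAntidiagonal.sigmaAntidiagonalEquivProd.tsum_eq (WW μ ν a)]
  rw [show (fun c : Σ n : ℕ, Finset.HasAntidiagonal.antidiagonal n => WW μ ν a (Finset.HasAntidiagonal.sigmaAntidiagonalEquivProd c))
      = (WW μ ν a) ∘ Finset.HasAntidiagonal.sigmaAntidiagonalEquivProd from rfl]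
  rw [Summable.tsum_sigma' (fun n => (hasSum_fintype _).summable)
    (Finset.HasAntidiagonal.sigmaAntidiagonalEquivProd.summable_iff.mpr (WW_summable hμ hν ha))]
  congr 1
  funext n
  rw [← Finset.sum_finset_coe, ← tsum_fintype (L := SummationFilter.unconditional _)]
  rfl

/-- `∫_0^a (I_μ(x)/x)(I_ν(a−x)/(a−x)) dx = (1/μ + 1/ν) I_{μ+ν}(a)/a`. -/
theorem stmt3 (μ ν a : ℝ) (hμ : 0 < μ) (hν : 0 < ν) (ha : 0 < a) :
    ∫ x in (0 : ℝ)..a, besselI μ x / x * (besselI ν (a - x) / (a - x)) =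
    (1 / μ + 1 / ν) * besselI (μ + ν) a / a := by
  have hμν : 0 < μ + ν := by linarith
  calc ∫ x in (0 : ℝ)..a, besselI μ x / x * (besselI ν (a - x) / (a - x))
      = ∫ x in Set.Ioc 0 a, besselI μ x / x * (besselI ν (a - x) / (a - x)) :=
        intervalIntegral.integral_of_le ha.le
    _ = ∫ x in Set.Ioo 0 a, besselI μ x / x * (besselI ν (a - x) / (a - x)) :=
        MeasureTheory.integral_Ioc_eq_integral_Ioo
    _ = ∫ x in Set.Ioo 0 a, ∑' p : ℕ × ℕ, TT μ ν a p x :=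
        MeasureTheory.setIntegral_congr_fun measurableSet_Ioo
          (fun x hx => TT_key hμ hν ha hx)
    _ = ∑' p : ℕ × ℕ, ∫ x in Set.Ioo 0 a, TT μ ν a p x :=
        (MeasureTheory.integral_tsum_of_summable_integral_norm
          (fun p => TT_int hμ hν ha p) (TT_norm_summable hμ hν ha)).symm
    _ = ∑' p : ℕ × ℕ, WW μ ν a p := tsum_congr (TT_val hμ hν ha)
    _ = ∑' n : ℕ, ∑ kl ∈ Finset.HasAntidiagonal.antidiagonal n, WW μ ν a kl := WW_regroup hμ hν ha
    _ = ∑' n : ℕ, (1/μ + 1/ν) * ((a/2) ^ (2*(n:ℝ)+(μ+ν)) /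
          (Real.Gamma ((n:ℝ)+1) * Real.Gamma ((n:ℝ)+(μ+ν)+1))) / a :=
        tsum_congr (WW_antidiagonal_sum hμ hν ha)
    _ = (1 / μ + 1 / ν) * besselI (μ + ν) a / a := by
        rw [besselI, tsum_div_const, tsum_mul_left]
end

section
/- For all λ > 0, c > 0, t > 0 and every real x with |x| < ct, setting y = (λ/c)·√(c²t² − x²) one has (λ e^{−λt}/(2c)) · ∑_{k=0}^∞ ((λ/(2c))√(c²t² − x²))^{k−1} / Γ((k+1)/2)² = (λ e^{−λt}/(2c)) · [I_0(y) + L_0(y)] + e^{−λt}/(π√(c²t² − x²)). (This is the closed form of the unconditional density law p^0(x,t) of the random motion X_0(t).) -/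
open MeasureTheory Real

/-- The modified Struve function of order `μ`, defined by its series. -/
noncomputable def struveL (μ x : ℝ) : ℝ :=
  ∑' k : ℕ, (x / 2) ^ (2 * (k : ℝ) + μ + 1) /
    (Real.Gamma ((k : ℝ) + 3 / 2) * Real.Gamma ((k : ℝ) + μ + 3 / 2))

lemma aux_summable (z a b : ℝ) (hz : 0 < z) (hb : 0 < b) :
    Summable (fun m : ℕ => z ^ (2 * (m : ℝ) + a) / Real.Gamma ((m : ℝ) + b) ^ 2) := by
  apply summable_of_ratio_norm_eventually_le (r := 1/2) (by norm_num)
  filter_upwards [Filter.eventually_ge_atTop ⌈2 * z⌉₊] with m hm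
  have hmz : 2 * z ≤ (m : ℝ) := le_trans (Nat.le_ceil _) (by exact_mod_cast hm)
  have hmb : (0:ℝ) < (m : ℝ) + b := by positivity
  have hΓ : 0 < Real.Gamma ((m : ℝ) + b) := Real.Gamma_pos_of_pos hmb
  have hterm : 0 < z ^ (2 * (m : ℝ) + a) / Real.Gamma ((m : ℝ) + b) ^ 2 := by positivity
  have hcast : ((m + 1 : ℕ) : ℝ) = (m : ℝ) + 1 := by push_cast; ring
  have hpow : z ^ (2 * ((m : ℝ) + 1) + a) = z ^ (2:ℝ) * z ^ (2 * (m : ℝ) + a) := by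
    rw [← Real.rpow_add hz]; ring_nf
  have hG : Real.Gamma (((m : ℝ) + 1) + b) = ((m : ℝ) + b) * Real.Gamma ((m : ℝ) + b) := by
    rw [show ((m : ℝ) + 1) + b = ((m : ℝ) + b) + 1 by ring, Real.Gamma_add_one hmb.ne']
  have heq : z ^ (2 * ((m + 1 : ℕ) : ℝ) + a) / Real.Gamma (((m + 1 : ℕ) : ℝ) + b) ^ 2
      = (z ^ (2:ℝ) / ((m : ℝ) + b) ^ 2) * (z ^ (2 * (m : ℝ) + a) / Real.Gamma ((m : ℝ) + b) ^ 2) := by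
    rw [hcast, hpow, hG]
    field_simp
  rw [Real.norm_eq_abs, Real.norm_eq_abs, heq, abs_of_pos hterm,
    abs_of_pos (by positivity)]
  have hratio : z ^ (2:ℝ) / ((m : ℝ) + b) ^ 2 ≤ 1 / 2 := by
    rw [Real.rpow_two, div_le_div_iff₀ (by positivity) (by norm_num)]
    nlinarith
  exact mul_le_mul_of_nonneg_right hratio hterm.le

/-- Closed form of the unconditional density law `p^0(x,t)` of the random motion `X_0(t)`:
with `y = (λ/c)√(c²t²−x²)`,
`(λe^{−λt}/(2c)) ∑_k ((λ/(2c))√(c²t²−x²))^{k−1}/Γ((k+1)/2)²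
  = (λe^{−λt}/(2c))[I_0(y) + L_0(y)] + e^{−λt}/(π√(c²t²−x²))`. -/
theorem stmt8 (lam c t x : ℝ) (hlam : 0 < lam) (hc : 0 < c) (ht : 0 < t)
    (hx : |x| < c * t) :
    lam * Real.exp (-lam * t) / (2 * c) *
      ∑' k : ℕ, (lam / (2 * c) * Real.sqrt (c ^ 2 * t ^ 2 - x ^ 2)) ^ ((k : ℝ) - 1) /
        Real.Gamma (((k : ℝ) + 1) / 2) ^ 2 =
    lam * Real.exp (-lam * t) / (2 * c) *
        (besselI 0 (lam / c * Real.sqrt (c ^ 2 * t ^ 2 - x ^ 2)) +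
         struveL 0 (lam / c * Real.sqrt (c ^ 2 * t ^ 2 - x ^ 2))) +
      Real.exp (-lam * t) / (π * Real.sqrt (c ^ 2 * t ^ 2 - x ^ 2)) := by
  have hx2 : x ^ 2 < c ^ 2 * t ^ 2 := by
    have := sq_lt_sq' (neg_lt_of_neg_lt (by linarith [abs_lt.mp hx])) (abs_lt.mp hx).2
    nlinarith [sq_abs x, (abs_lt.mp hx).1, (abs_lt.mp hx).2]
  set s : ℝ := Real.sqrt (c ^ 2 * t ^ 2 - x ^ 2) with hs_def
  have hs : 0 < s := Real.sqrt_pos.mpr (by linarith)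
  set z : ℝ := lam / (2 * c) * s with hz_def
  have hz : 0 < z := by positivity
  set f : ℕ → ℝ := fun k => z ^ ((k : ℝ) - 1) / Real.Gamma (((k : ℝ) + 1) / 2) ^ 2 with hf
  -- even terms
  have heven : ∀ m : ℕ, f (2 * m) = z ^ (2 * (m : ℝ) + (-1)) / Real.Gamma ((m : ℝ) + 1/2) ^ 2 := by
    intro m
    simp only [hf]
    push_cast
    ring_nf
  have hodd : ∀ m : ℕ, f (2 * m + 1) = z ^ (2 * (m : ℝ) + 0) / Real.Gamma ((m : ℝ) + 1) ^ 2 := by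
    intro m
    simp only [hf]
    push_cast
    ring_nf
  have hse : Summable fun m : ℕ => f (2 * m) := by
    simp only [heven]; exact aux_summable z (-1) (1/2) hz (by norm_num)
  have hso : Summable fun m : ℕ => f (2 * m + 1) := by
    simp only [hodd]; exact aux_summable z 0 1 hz one_pos
  have hsplit := tsum_even_add_odd hse hso
  have hy2 : lam / c * s / 2 = z := by
    rw [hz_def]; field_simp
  -- odd sum = besselI
  have hI : ∑' m : ℕ, f (2 * m + 1) = besselI 0 (lam / c * s) := by
    rw [besselI]
    apply tsum_congr
    intro m
    rw [hodd m, hy2]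
    ring_nf
  -- even sum = first term + struveL
  have hL : ∑' m : ℕ, f (2 * m) = z ^ (-1 : ℝ) / π + struveL 0 (lam / c * s) := by
    rw [Summable.tsum_eq_zero_add hse]
    congr 1
    · show f 0 = z ^ (-1 : ℝ) / π
      rw [heven 0]
      norm_num [Real.Gamma_one_half_eq, Real.sq_sqrt Real.pi_pos.le]
    · rw [struveL]
      apply tsum_congr
      intro m
      rw [show 2 * (m + 1) = 2 * m + 2 by ring]
      have : f (2 * m + 2) = z ^ (2 * (m : ℝ) + 1) / Real.Gamma ((m : ℝ) + 3/2) ^ 2 := by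
        simp only [hf]
        push_cast
        ring_nf
      rw [this, hy2]
      ring_nf
  rw [← hsplit, hL, hI]
  have hzinv : z ^ (-1 : ℝ) = 1 / z := by
    rw [Real.rpow_neg_one]; exact inv_eq_one_div z
  rw [hzinv]
  have hπ : (0:ℝ) < π := Real.pi_pos
  rw [hz_def]
  field_simp
  ring
end

section
/- Let p^0(x,t) = (λe^{−λt}/(2c)) · ∑_{k=0}^∞ ((λ/(2c))√(c²t² − x²))^{k−1}/Γ((k+1)/2)² for |x| < ct, with λ, c, t > 0. Then for every even positive integer p, ∫_{−ct}^{ct} x^p · p^0(x,t) dx = e^{−λt}·(2/(λt))^{(p−1)/2}·(ct)^p·Γ((p+1)/2)·[I_{(p+1)/2}(λt) + L_{(p+1)/2}(λt)] + e^{−λt}·(ct)^p·Γ((p+1)/2)/(√π·Γ(p/2+1)), while for every odd positive integer p the integral equals 0. (These are the p-th moments of the random motion X_0(t).) -/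
open MeasureTheory Real Set intervalIntegral

/-- The unconditional density law of the random motion `X_0(t)`. -/
noncomputable def p0 (lam c t x : ℝ) : ℝ :=
  lam * Real.exp (-lam * t) / (2 * c) *
    ∑' k : ℕ, (lam / (2 * c) * Real.sqrt (c ^ 2 * t ^ 2 - x ^ 2)) ^ ((k : ℝ) - 1) /
      Real.Gamma (((k : ℝ) + 1) / 2) ^ 2


lemma realBeta_integrable {s t : ℝ} (hs : 0 < s) (ht : 0 < t) :
    IntegrableOn (fun x : ℝ => x ^ (s - 1) * (1 - x) ^ (t - 1)) (Ioo 0 1) := by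
  have hconv := Complex.betaIntegral_convergent (u := (s:ℂ)) (v := (t:ℂ)) (by simpa) (by simpa)
  have h1 : IntegrableOn (fun x : ℝ => (x:ℂ) ^ ((s:ℂ) - 1) * (1 - (x:ℂ)) ^ ((t:ℂ) - 1))
      (Ioc 0 1) := by
    rw [← intervalIntegrable_iff_integrableOn_Ioc_of_le zero_le_one]
    exact hconv
  have h2 := h1.re
  have h2' : IntegrableOn (fun x : ℝ => ((x:ℂ) ^ ((s:ℂ) - 1) * (1 - (x:ℂ)) ^ ((t:ℂ) - 1)).re)
      (Ioc 0 1) := h2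
  refine ((h2'.congr_fun ?_ measurableSet_Ioc).mono_set Ioo_subset_Ioc_self)
  intro x hx
  have hx0 : (0:ℝ) ≤ x := hx.1.le
  have hx1 : (0:ℝ) ≤ 1 - x := by linarith [hx.2]
  have e1 : (x:ℂ) ^ ((s:ℂ) - 1) = ((x ^ (s-1) : ℝ) : ℂ) := by
    rw [show ((s:ℂ)-1) = ((s-1:ℝ):ℂ) by push_cast; ring, ← Complex.ofReal_cpow hx0]
  have e2 : (1 - (x:ℂ)) ^ ((t:ℂ) - 1) = (((1-x) ^ (t-1) : ℝ) : ℂ) := by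
    rw [show (1 - (x:ℂ)) = (((1:ℝ)-x : ℝ) : ℂ) by push_cast; ring, show ((t:ℂ)-1) = ((t-1:ℝ):ℂ) by push_cast; ring, ← Complex.ofReal_cpow hx1]
  simp [e1, e2, ← Complex.ofReal_mul]

lemma realBeta_eq {s t : ℝ} (hs : 0 < s) (ht : 0 < t) :
    ∫ x in Ioo (0:ℝ) 1, x ^ (s - 1) * (1 - x) ^ (t - 1) =
      Real.Gamma s * Real.Gamma t / Real.Gamma (s + t) := by
  have key := Complex.Gamma_mul_Gamma_eq_betaIntegral (s := (s:ℂ)) (t := (t:ℂ))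
    (by simpa) (by simpa)
  have hbeta : Complex.betaIntegral s t =
      ((∫ x in (0:ℝ)..1, x ^ (s - 1) * (1 - x) ^ (t - 1) : ℝ) : ℂ) := by
    rw [Complex.betaIntegral, ← intervalIntegral.integral_ofReal]
    refine intervalIntegral.integral_congr ?_
    intro x hx
    rw [Set.uIcc_of_le zero_le_one] at hx
    have hx0 : (0:ℝ) ≤ x := hx.1
    have hx1 : (0:ℝ) ≤ 1 - x := by linarith [hx.2]
    have e1 : (x:ℂ) ^ ((s:ℂ) - 1) = ((x ^ (s-1) : ℝ) : ℂ) := by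
      rw [show ((s:ℂ)-1) = ((s-1:ℝ):ℂ) by push_cast; ring, ← Complex.ofReal_cpow hx0]
    have e2 : (1 - (x:ℂ)) ^ ((t:ℂ) - 1) = (((1-x) ^ (t-1) : ℝ) : ℂ) := by
      rw [show (1 - (x:ℂ)) = (((1:ℝ)-x : ℝ) : ℂ) by push_cast; ring,
        show ((t:ℂ)-1) = ((t-1:ℝ):ℂ) by push_cast; ring, ← Complex.ofReal_cpow hx1]
    simp [e1, e2, ← Complex.ofReal_mul]
  rw [hbeta, ← Complex.ofReal_add, Complex.Gamma_ofReal, Complex.Gamma_ofReal,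
    Complex.Gamma_ofReal, ← Complex.ofReal_mul, ← Complex.ofReal_mul] at key
  have key' : Real.Gamma s * Real.Gamma t =
      Real.Gamma (s + t) * ∫ x in (0:ℝ)..1, x ^ (s - 1) * (1 - x) ^ (t - 1) :=
    mod_cast key
  have hst : Real.Gamma (s + t) ≠ 0 := (Real.Gamma_pos_of_pos (by linarith)).ne'
  rw [← MeasureTheory.integral_Ioc_eq_integral_Ioo,
    ← intervalIntegral.integral_of_le zero_le_one]
  field_simp [key']
  rw [key']; ring

lemma gamma_factorial_le {x : ℝ} (hx : 1/2 ≤ x) (m : ℕ) :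
    Real.Gamma x * m.factorial / 2 ^ m ≤ Real.Gamma (x + m) := by
  induction m with
  | zero => simp
  | succ n ih =>
    have hx0 : 0 < x := by linarith
    have hxn : x + n ≠ 0 := by positivity
    have : Real.Gamma (x + (n+1:ℕ)) = (x + n) * Real.Gamma (x + n) := by
      push_cast
      rw [show x + ((n:ℝ)+1) = (x + n) + 1 by ring, Real.Gamma_add_one hxn]
    rw [this]
    have hge : ((n:ℝ)+1)/2 ≤ x + n := by linarith
    have hΓpos : 0 < Real.Gamma (x + n) := Real.Gamma_pos_of_pos (by positivity)
    calc Real.Gamma x * (n+1).factorial / 2 ^ (n+1)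
        = (((n:ℝ)+1)/2) * (Real.Gamma x * n.factorial / 2 ^ n) := by
          rw [Nat.factorial_succ]; push_cast; ring
      _ ≤ (x + n) * Real.Gamma (x + n) := by
          apply mul_le_mul hge ih (by positivity) (by linarith)

lemma summable_gamma_aux (w : ℝ) {x y : ℝ} (hx : 1/2 ≤ x) (hy : 1/2 ≤ y) :
    Summable fun m : ℕ => w ^ m / (Real.Gamma (x + m) * Real.Gamma (y + m)) := by
  have hx0 : 0 < Real.Gamma x := Real.Gamma_pos_of_pos (by linarith)
  have hy0 : 0 < Real.Gamma y := Real.Gamma_pos_of_pos (by linarith)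
  have hsum : Summable fun m : ℕ => (4 * |w|) ^ m / m.factorial / (Real.Gamma x * Real.Gamma y) :=
    (Real.summable_pow_div_factorial (4 * |w|)).div_const _
  refine hsum.of_norm_bounded (fun m => ?_)
  have hfac : (1:ℝ) ≤ m.factorial := by exact_mod_cast m.factorial_pos
  have hxm : 0 < Real.Gamma (x + m) := Real.Gamma_pos_of_pos (by positivity)
  have hym : 0 < Real.Gamma (y + m) := Real.Gamma_pos_of_pos (by positivity)
  have hprod : Real.Gamma x * Real.Gamma y * m.factorial / 4 ^ m ≤
      Real.Gamma (x + m) * Real.Gamma (y + m) := by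
    have h1 : Real.Gamma x * m.factorial / 2 ^ m ≤ Real.Gamma (x + m) := gamma_factorial_le hx m
    have h2 : Real.Gamma y * m.factorial / 2 ^ m ≤ Real.Gamma (y + m) := gamma_factorial_le hy m
    calc Real.Gamma x * Real.Gamma y * m.factorial / 4 ^ m
        ≤ Real.Gamma x * Real.Gamma y * (m.factorial * m.factorial) / 4 ^ m := by
          have : (m.factorial : ℝ) ≤ m.factorial * m.factorial := by nlinarith
          gcongr
      _ = (Real.Gamma x * m.factorial / 2 ^ m) * (Real.Gamma y * m.factorial / 2 ^ m) := by
          rw [show (4:ℝ) = 2 * 2 by norm_num, mul_pow]; ring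
      _ ≤ Real.Gamma (x + m) * Real.Gamma (y + m) := by
          apply mul_le_mul h1 h2 (by positivity) hxm.le
  have habs : ‖w ^ m / (Real.Gamma (x + m) * Real.Gamma (y + m))‖ =
      |w| ^ m / (Real.Gamma (x + m) * Real.Gamma (y + m)) := by
    rw [Real.norm_eq_abs, abs_div, abs_pow, abs_of_pos (mul_pos hxm hym)]
  rw [habs]
  calc |w| ^ m / (Real.Gamma (x + m) * Real.Gamma (y + m))
      ≤ |w| ^ m / (Real.Gamma x * Real.Gamma y * m.factorial / 4 ^ m) := by
        gcongr
      _ = (4 * |w|) ^ m / m.factorial / (Real.Gamma x * Real.Gamma y) := by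
        rw [mul_pow]
        field_simp

lemma even_intervalIntegral {f : ℝ → ℝ} (hf : ∀ x, f (-x) = f x) {a : ℝ}
    (hi : IntervalIntegrable f volume 0 a) :
    IntervalIntegrable f volume (-a) a ∧
      ∫ x in (-a)..a, f x = 2 * ∫ x in (0:ℝ)..a, f x := by
  have h2 : IntervalIntegrable (fun x => f (-x)) volume (-0) (-a) :=
    (IntervalIntegrable.iff_comp_neg (by simp)).mp hi
  simp only [hf, neg_zero] at h2
  have hii : IntervalIntegrable f volume (-a) a := h2.symm.trans (b := 0) hi
  refine ⟨hii, ?_⟩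
  have hsplit : ∫ x in (-a)..a, f x = (∫ x in (-a)..(0:ℝ), f x) + ∫ x in (0:ℝ)..a, f x :=
    (intervalIntegral.integral_add_adjacent_intervals h2.symm hi).symm
  have hneg : ∫ x in (0:ℝ)..a, f (-x) = ∫ x in (-a)..(0:ℝ), f x := by
    simpa using intervalIntegral.integral_comp_neg (a := 0) (b := a) f
  simp only [hf] at hneg
  rw [hsplit, ← hneg]; ring

lemma moment_sub {a : ℝ} (ha : 0 < a) (p k : ℕ) :
    IntegrableOn (fun x : ℝ => x ^ p * (a^2 - x^2) ^ (((k:ℝ)-1)/2)) (Ioo 0 a) ∧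
    ∫ x in Ioo 0 a, x ^ p * (a^2 - x^2) ^ (((k:ℝ)-1)/2) =
      a ^ ((p:ℝ)+(k:ℝ)) / 2 *
        (Real.Gamma (((p:ℝ)+1)/2) * Real.Gamma (((k:ℝ)+1)/2) /
          Real.Gamma (((p:ℝ)+(k:ℝ))/2 + 1)) := by
  set s : ℝ := ((p:ℝ)+1)/2 with hs_def
  set t : ℝ := ((k:ℝ)+1)/2 with ht_def
  have hs : 0 < s := by positivity
  have ht : 0 < t := by positivity
  set f : ℝ → ℝ := fun u => a * Real.sqrt u with hf_def
  set f' : ℝ → ℝ := fun u => a / (2 * Real.sqrt u) with hf'_def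
  set g : ℝ → ℝ := fun x => x ^ p * (a^2 - x^2) ^ (((k:ℝ)-1)/2) with hg_def
  have hderiv : ∀ u ∈ Ioo (0:ℝ) 1, HasDerivWithinAt f (f' u) (Ioo 0 1) u := by
    intro u hu
    have := ((Real.hasDerivAt_sqrt (ne_of_gt hu.1)).const_mul a).hasDerivWithinAt
      (s := Ioo (0:ℝ) 1)
    refine this.congr_deriv ?_
    show a * (1 / (2 * Real.sqrt u)) = a / (2 * Real.sqrt u); ring
  have hinj : Set.InjOn f (Ioo 0 1) := by
    intro u hu v hv h
    have h' : Real.sqrt u = Real.sqrt v := by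
      have := mul_left_cancel₀ (ne_of_gt ha) h
      exact this
    exact (Real.sqrt_inj hu.1.le hv.1.le).mp h'
  have himg : f '' (Ioo 0 1) = Ioo 0 a := by
    ext x
    constructor
    · rintro ⟨u, hu, rfl⟩
      have h0 : 0 < Real.sqrt u := Real.sqrt_pos.mpr hu.1
      have h1 : Real.sqrt u < 1 := by
        rw [show (1:ℝ) = Real.sqrt 1 by simp]
        exact Real.sqrt_lt_sqrt hu.1.le hu.2
      exact ⟨mul_pos ha h0, by simpa [hf_def] using (mul_lt_of_lt_one_right ha h1)⟩
    · intro hx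
      refine ⟨(x/a)^2, ⟨pow_pos (div_pos hx.1 ha) 2, ?_⟩, ?_⟩
      · have : x / a < 1 := (div_lt_one ha).mpr hx.2
        have h0 : 0 < x / a := div_pos hx.1 ha
        nlinarith
      · simp only [hf_def]
        rw [Real.sqrt_sq (div_pos hx.1 ha).le]
        field_simp
  have hcongr : ∀ u ∈ Ioo (0:ℝ) 1, |f' u| • g (f u) =
      a ^ ((p:ℝ)+(k:ℝ)) / 2 * (u ^ (s - 1) * (1 - u) ^ (t - 1)) := by
    intro u hu
    obtain ⟨hu0, hu1⟩ := hu
    have hsq : 0 < Real.sqrt u := Real.sqrt_pos.mpr hu0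
    have h1 : a^2 - (a * Real.sqrt u)^2 = a^2 * (1-u) := by
      rw [mul_pow, Real.sq_sqrt hu0.le]; ring
    have h2 : (a^2 * (1-u)) ^ (((k:ℝ)-1)/2) =
        (a^2 : ℝ) ^ (((k:ℝ)-1)/2) * (1-u) ^ (((k:ℝ)-1)/2) :=
      Real.mul_rpow (by positivity) (by linarith)
    have h3 : ((a:ℝ)^2) ^ (((k:ℝ)-1)/2) = a ^ ((k:ℝ)-1) := by
      rw [← Real.rpow_natCast a 2, ← Real.rpow_mul ha.le]
      norm_num
      congr 1
      ring
    have h4 : (a * Real.sqrt u)^p = a^p * u ^ ((p:ℝ)/2) := by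
      rw [mul_pow]
      congr 1
      rw [Real.sqrt_eq_rpow, ← Real.rpow_natCast (u ^ ((1:ℝ)/2)) p, ← Real.rpow_mul hu0.le]
      congr 1
      ring
    have h5 : |f' u| = a/2 * u ^ (-(1:ℝ)/2) := by
      rw [hf'_def]
      simp only []
      rw [abs_of_pos (by positivity)]
      rw [show -(1:ℝ)/2 = -(1/2) by ring, Real.rpow_neg hu0.le, ← Real.sqrt_eq_rpow]
      field_simp
    rw [smul_eq_mul, hg_def]
    simp only [hf_def]
    rw [h5, h4, h1, h2, h3]
    have e1 : a ^ ((p:ℝ)+(k:ℝ)) = a^p * a * a ^ ((k:ℝ)-1) := by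
      rw [show (p:ℝ)+(k:ℝ) = (p:ℝ) + (1 + ((k:ℝ)-1)) by ring, Real.rpow_add ha,
        Real.rpow_add ha, Real.rpow_one, Real.rpow_natCast]
      ring
    have e2 : u ^ (s-1) = u ^ (-(1:ℝ)/2) * u ^ ((p:ℝ)/2) := by
      rw [← Real.rpow_add hu0]
      congr 1
      rw [hs_def]; ring
    have e3 : (1-u) ^ (t-1) = (1-u) ^ (((k:ℝ)-1)/2) := by
      congr 1
      rw [ht_def]; ring
    rw [e1, e2, e3]
    ring
  constructor
  · rw [← himg]
    rw [integrableOn_image_iff_integrableOn_abs_deriv_smul measurableSet_Ioo hderiv hinj]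
    apply MeasureTheory.IntegrableOn.congr_fun _ (fun u hu => (hcongr u hu).symm) measurableSet_Ioo
    exact (realBeta_integrable hs ht).const_mul _
  · rw [← himg,
      integral_image_eq_integral_abs_deriv_smul measurableSet_Ioo hderiv hinj g,
      MeasureTheory.setIntegral_congr_fun measurableSet_Ioo hcongr,
      MeasureTheory.integral_const_mul, realBeta_eq hs ht]
    congr 2
    rw [hs_def, ht_def]; ring

set_option maxHeartbeats 1000000 in
/-- The `p`-th moments of the random motion `X_0(t)`: for `p` even positive,
`∫_{−ct}^{ct} x^p p^0(x,t) dx = e^{−λt}(2/(λt))^{(p−1)/2}(ct)^p Γ((p+1)/2)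
  [I_{(p+1)/2}(λt) + L_{(p+1)/2}(λt)] + e^{−λt}(ct)^p Γ((p+1)/2)/(√π Γ(p/2+1))`,
while for `p` odd positive the integral vanishes. -/
theorem stmt10 (lam c t : ℝ) (hlam : 0 < lam) (hc : 0 < c) (ht : 0 < t)
    (p : ℕ) (hp : 0 < p) :
    (Even p →
      ∫ x in (-(c * t))..(c * t), x ^ p * p0 lam c t x =
        Real.exp (-lam * t) * (2 / (lam * t)) ^ (((p : ℝ) - 1) / 2) * (c * t) ^ p *
            Real.Gamma (((p : ℝ) + 1) / 2) *
            (besselI (((p : ℝ) + 1) / 2) (lam * t) + struveL (((p : ℝ) + 1) / 2) (lam * t)) +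
          Real.exp (-lam * t) * (c * t) ^ p * Real.Gamma (((p : ℝ) + 1) / 2) /
            (Real.sqrt π * Real.Gamma ((p : ℝ) / 2 + 1))) ∧
    (Odd p → ∫ x in (-(c * t))..(c * t), x ^ p * p0 lam c t x = 0) := by
  constructor
  · intro hpe
    set a := c * t with ha_def
    have ha : 0 < a := mul_pos hc ht
    set z := lam * t with hz_def
    have hz : 0 < z := mul_pos hlam ht
    have hz2 : 0 < z / 2 := by positivity
    set w : ℝ := lam / (2 * c) with hw_def
    have hw : 0 < w := by positivity
    set E : ℝ := Real.exp (-lam * t) with hE_def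
    have hE : 0 < E := Real.exp_pos _
    set T : ℕ → ℝ := fun k =>
      (z / 2) ^ (k:ℝ) / (Real.Gamma (((k:ℝ) + 1) / 2) * Real.Gamma (((p:ℝ) + (k:ℝ)) / 2 + 1))
      with hT_def
    set D : ℕ → ℝ := fun k =>
      lam * E / (2 * c) * (w ^ ((k:ℝ) - 1) / Real.Gamma (((k:ℝ) + 1) / 2) ^ 2)
      with hD_def
    set φ : ℕ → ℝ → ℝ := fun k x => x ^ p * (a ^ 2 - x ^ 2) ^ (((k:ℝ) - 1) / 2) with hφ_def
    have hΓν : 0 < Real.Gamma (((p:ℝ) + 1) / 2) := Real.Gamma_pos_of_pos (by positivity)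
    clear_value a z w E T D φ
    -- pointwise expansion of the integrand
    have hpt : ∀ x ∈ Ioc (-a) a, x ^ p * p0 lam c t x = ∑' k, D k * φ k x := by
      intro x hx
      have hx2 : x ^ 2 ≤ a ^ 2 := by nlinarith [hx.1, hx.2]
      have hs0 : (0:ℝ) ≤ a ^ 2 - x ^ 2 := by linarith
      have hct : c ^ 2 * t ^ 2 - x ^ 2 = a ^ 2 - x ^ 2 := by rw [ha_def]; ring
      simp only [p0, hct, ← hw_def, ← hE_def]
      rw [show x ^ p * (lam * E / (2 * c) *
            ∑' k : ℕ, (w * Real.sqrt (a ^ 2 - x ^ 2)) ^ ((k:ℝ) - 1) /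
              Real.Gamma (((k:ℝ) + 1) / 2) ^ 2) =
          (x ^ p * (lam * E / (2 * c))) *
            ∑' k : ℕ, (w * Real.sqrt (a ^ 2 - x ^ 2)) ^ ((k:ℝ) - 1) /
              Real.Gamma (((k:ℝ) + 1) / 2) ^ 2 from by ring, ← tsum_mul_left]
      refine tsum_congr fun k => ?_
      have hr : (w * Real.sqrt (a ^ 2 - x ^ 2)) ^ ((k:ℝ) - 1) =
          w ^ ((k:ℝ) - 1) * (a ^ 2 - x ^ 2) ^ (((k:ℝ) - 1) / 2) := by
        rw [Real.mul_rpow hw.le (Real.sqrt_nonneg _)]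
        congr 1
        rw [Real.sqrt_eq_rpow, ← Real.rpow_mul hs0]
        congr 1
        ring
      rw [hr]
      simp only [hD_def, hφ_def]
      ring
    -- the basic one-sided integrals
    have hms : ∀ k : ℕ, IntegrableOn (φ k) (Ioo 0 a) ∧
        ∫ x in Ioo 0 a, φ k x = a ^ ((p:ℝ) + (k:ℝ)) / 2 *
          (Real.Gamma (((p:ℝ) + 1) / 2) * Real.Gamma (((k:ℝ) + 1) / 2) /
            Real.Gamma (((p:ℝ) + (k:ℝ)) / 2 + 1)) := by
      intro k
      simp only [hφ_def]
      exact moment_sub ha p k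
    have hφeven : ∀ k, ∀ x : ℝ, φ k (-x) = φ k x := by
      intro k x
      simp only [hφ_def, hpe.neg_pow, neg_sq]
    have hφII : ∀ k, IntervalIntegrable (φ k) volume (-a) a ∧
        ∫ x in (-a)..a, φ k x = 2 * ∫ x in (0:ℝ)..a, φ k x := by
      intro k
      exact even_intervalIntegral (hφeven k)
        ((intervalIntegrable_iff_integrableOn_Ioo_of_le ha.le).mpr (hms k).1)
    have hφval : ∀ k, ∫ x in (-a)..a, φ k x =
        a ^ ((p:ℝ) + (k:ℝ)) * (Real.Gamma (((p:ℝ) + 1) / 2) *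
          Real.Gamma (((k:ℝ) + 1) / 2) / Real.Gamma (((p:ℝ) + (k:ℝ)) / 2 + 1)) := by
      intro k
      rw [(hφII k).2, intervalIntegral.integral_of_le ha.le,
        MeasureTheory.integral_Ioc_eq_integral_Ioo, (hms k).2]
      ring
    have hna : -a ≤ a := by linarith
    have hInt : ∀ k, IntegrableOn (fun x => D k * φ k x) (Ioc (-a) a) := by
      intro k
      exact ((intervalIntegrable_iff_integrableOn_Ioc_of_le hna).mp (hφII k).1).const_mul _
    -- the value of each integral
    have hVal : ∀ k, ∫ x in Ioc (-a) a, D k * φ k x =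
        E * a ^ p * Real.Gamma (((p:ℝ) + 1) / 2) * T k := by
      intro k
      have hΓk : 0 < Real.Gamma (((k:ℝ) + 1) / 2) := Real.Gamma_pos_of_pos (by positivity)
      have hΓpk : 0 < Real.Gamma (((p:ℝ) + (k:ℝ)) / 2 + 1) :=
        Real.Gamma_pos_of_pos (by positivity)
      have hwa : w ^ ((k:ℝ)) * a ^ ((k:ℝ)) = (z / 2) ^ ((k:ℝ)) := by
        rw [← Real.mul_rpow hw.le ha.le]
        congr 1
        rw [hw_def, ha_def, hz_def]
        field_simp
      rw [MeasureTheory.integral_const_mul, ← intervalIntegral.integral_of_le hna, hφval k]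
      simp only [hD_def, hT_def]
      rw [show lam * E / (2 * c) = E * w from by rw [hw_def]; ring]
      rw [Real.rpow_sub hw, Real.rpow_one, Real.rpow_add ha, Real.rpow_natCast, ← hwa]
      field_simp
      simp only [Real.rpow_natCast]
      ring
    -- summability
    have hsum1 : Summable (fun m : ℕ => T (2 * m)) := by
      have h := summable_gamma_aux ((z/2)^2) (x := 1/2) (y := (p:ℝ)/2 + 1) le_rfl
        (by have : (0:ℝ) ≤ (p:ℝ) := Nat.cast_nonneg p; linarith)
      refine h.congr fun m => ?_
      simp only [hT_def]
      have e1 : (1:ℝ)/2 + (m:ℝ) = ((↑(2*m):ℝ) + 1)/2 := by push_cast; ring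
      have e2 : ((p:ℝ)/2 + 1) + (m:ℝ) = ((p:ℝ) + (↑(2*m):ℝ))/2 + 1 := by push_cast; ring
      rw [e1, e2, Real.rpow_natCast, pow_mul]
    have hsum2 : Summable (fun m : ℕ => T (2 * m + 1)) := by
      have h := (summable_gamma_aux ((z/2)^2) (x := 1) (y := ((p:ℝ)+3)/2) (by norm_num)
        (by have : (0:ℝ) ≤ (p:ℝ) := Nat.cast_nonneg p; linarith)).mul_left (z/2)
      refine h.congr fun m => ?_
      simp only [hT_def]
      have e1 : (1:ℝ) + (m:ℝ) = ((↑(2*m+1):ℝ) + 1)/2 := by push_cast; ring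
      have e2 : (((p:ℝ)+3)/2) + (m:ℝ) = ((p:ℝ) + (↑(2*m+1):ℝ))/2 + 1 := by push_cast; ring
      rw [e1, e2, Real.rpow_natCast, pow_add, pow_mul, pow_one]
      ring
    have hsum3 : Summable (fun m : ℕ => T (2 * m + 2)) := by
      have h := (summable_gamma_aux ((z/2)^2) (x := 3/2) (y := (p:ℝ)/2 + 2) (by norm_num)
        (by have : (0:ℝ) ≤ (p:ℝ) := Nat.cast_nonneg p; linarith)).mul_left ((z/2)^2)
      refine h.congr fun m => ?_
      simp only [hT_def]
      have e1 : (3:ℝ)/2 + (m:ℝ) = ((↑(2*m+2):ℝ) + 1)/2 := by push_cast; ring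
      have e2 : ((p:ℝ)/2 + 2) + (m:ℝ) = ((p:ℝ) + (↑(2*m+2):ℝ))/2 + 1 := by push_cast; ring
      rw [e1, e2, Real.rpow_natCast, pow_add, pow_mul]
      ring
    have hTsum : Summable T := Summable.even_add_odd hsum1 hsum2
    -- series identities
    have hB : ∑' m : ℕ, T (2 * m + 1) =
        ((2:ℝ)/z) ^ (((p:ℝ) - 1)/2) * besselI (((p:ℝ) + 1)/2) z := by
      rw [besselI, ← tsum_mul_left]
      refine tsum_congr fun m => ?_
      simp only [hT_def]
      have h2z : (2:ℝ)/z = (z/2)⁻¹ := (inv_div z 2).symm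
      rw [h2z, Real.inv_rpow hz2.le, ← Real.rpow_neg hz2.le, ← mul_div_assoc,
        ← Real.rpow_add hz2]
      have e1 : ((↑(2*m+1):ℝ) + 1)/2 = (m:ℝ) + 1 := by push_cast; ring
      have e2 : ((p:ℝ) + (↑(2*m+1):ℝ))/2 + 1 = (m:ℝ) + ((p:ℝ) + 1)/2 + 1 := by
        push_cast; ring
      have e3 : ((↑(2*m+1):ℕ):ℝ) = -(((p:ℝ) - 1)/2) + (2*(m:ℝ) + ((p:ℝ) + 1)/2) := by
        push_cast; ring
      rw [e1, e2, e3]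
    have hS : ∑' m : ℕ, T (2 * m + 2) =
        ((2:ℝ)/z) ^ (((p:ℝ) - 1)/2) * struveL (((p:ℝ) + 1)/2) z := by
      rw [struveL, ← tsum_mul_left]
      refine tsum_congr fun m => ?_
      simp only [hT_def]
      have h2z : (2:ℝ)/z = (z/2)⁻¹ := (inv_div z 2).symm
      rw [h2z, Real.inv_rpow hz2.le, ← Real.rpow_neg hz2.le, ← mul_div_assoc,
        ← Real.rpow_add hz2]
      have e1 : ((↑(2*m+2):ℝ) + 1)/2 = (m:ℝ) + 3/2 := by push_cast; ring
      have e2 : ((p:ℝ) + (↑(2*m+2):ℝ))/2 + 1 = (m:ℝ) + ((p:ℝ) + 1)/2 + 3/2 := by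
        push_cast; ring
      have e3 : ((↑(2*m+2):ℕ):ℝ) = -(((p:ℝ) - 1)/2) + (2*(m:ℝ) + ((p:ℝ) + 1)/2 + 1) := by
        push_cast; ring
      rw [e1, e2, e3]
    -- interchange of sum and integral
    have hnorm : Summable fun k => ∫ x in Ioc (-a) a, ‖D k * φ k x‖ := by
      have heq : ∀ k, ∫ x in Ioc (-a) a, ‖D k * φ k x‖ = ∫ x in Ioc (-a) a, D k * φ k x := by
        intro k
        refine MeasureTheory.setIntegral_congr_fun measurableSet_Ioc fun x hx => ?_
        have h1 : (0:ℝ) ≤ a ^ 2 - x ^ 2 := by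
          nlinarith [hx.1, hx.2, sq_nonneg (a - x), sq_nonneg (a + x)]
        have h2 : 0 ≤ D k := by
          simp only [hD_def]
          positivity
        simp only [hφ_def]
        exact Real.norm_of_nonneg (mul_nonneg h2 (mul_nonneg (hpe.pow_nonneg x)
          (Real.rpow_nonneg h1 _)))
      simp only [heq, hVal]
      exact hTsum.mul_left _
    have hmain : ∫ x in (-a)..a, x ^ p * p0 lam c t x =
        E * a ^ p * Real.Gamma (((p:ℝ) + 1) / 2) * ∑' k, T k := by
      rw [intervalIntegral.integral_of_le hna,
        MeasureTheory.setIntegral_congr_fun measurableSet_Ioc hpt,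
        ← MeasureTheory.integral_tsum_of_summable_integral_norm hInt hnorm]
      rw [show (fun k => ∫ x in Ioc (-a) a, D k * φ k x) = fun k =>
        E * a ^ p * Real.Gamma (((p:ℝ) + 1) / 2) * T k from funext hVal, tsum_mul_left]
    -- split the sum
    have hsum3' : Summable (fun m : ℕ => T (2 * m + 1 + 1)) :=
      hsum3.congr fun m => congrArg T (by omega)
    have hsplit : ∑' k, T k = T 0 + ((∑' m, T (2 * m + 1)) + ∑' m, T (2 * m + 2)) := by
      rw [Summable.tsum_eq_zero_add hTsum]
      congr 1
      rw [← tsum_even_add_odd hsum2 hsum3']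
    have hT0 : T 0 = 1 / (Real.sqrt π * Real.Gamma ((p:ℝ)/2 + 1)) := by
      simp only [hT_def]
      rw [Nat.cast_zero, Real.rpow_zero,
        show ((0:ℝ) + 1)/2 = 1/2 by norm_num, Real.Gamma_one_half_eq,
        show ((p:ℝ) + 0)/2 + 1 = (p:ℝ)/2 + 1 by ring]
    rw [hmain, hsplit, hB, hS, hT0]
    ring
  · intro hpo
    have hodd : ∀ x : ℝ, (-x) ^ p * p0 lam c t (-x) = -(x ^ p * p0 lam c t x) := by
      intro x
      have h1 : p0 lam c t (-x) = p0 lam c t x := by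
        simp only [p0, neg_sq]
      rw [h1, hpo.neg_pow]
      ring
    have h := intervalIntegral.integral_comp_neg (a := -(c*t)) (b := c*t)
      (fun x => x ^ p * p0 lam c t x)
    simp only [hodd, neg_neg, intervalIntegral.integral_neg] at h
    linarith
end
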